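/- arXiv:1502.03379 — 2 statements merged into one kernel-verified Lean document; each statement's English description precedes it below -/
import Mathlib

section
/- Let N be a binary nearly stable network and T a binary phylogenetic tree on the same leaf set. Suppose N contains vertices w, u, g, v, e and leaves ℓ, ℓ' such that: w is a tree vertex with children u and g, both tree vertices; v and e are reticulations; the children of u are v and e; the children of g are e and v; the child of v is the leaf ℓ; and the child of e is the leaf ℓ'. Let N' be obtained from N by deleting the edges (u, e) and (g, v). If N displays T, then N' displays T. (Theorem 3(iii)) -/
/-!
Common framework: a binary phylogenetic network is modelled as a directed graph
on an ambient type `V`, given by a vertex set `verts : Set V`, an adjacency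
relation `adj : V → V → Prop` (no parallel edges are possible in this model),
and a root vertex `root`.
-/

/-- The outdegree of a vertex `v`: the number of its out-neighbours. -/
noncomputable def outdeg {V : Type*} (adj : V → V → Prop) (v : V) : ℕ :=
  {u | adj v u}.ncard

/-- The indegree of a vertex `v`: the number of its in-neighbours. -/
noncomputable def indeg {V : Type*} (adj : V → V → Prop) (v : V) : ℕ :=
  {u | adj u v}.ncard

/-- A leaf of the network: a vertex with outdegree 0. -/
def IsLeaf {V : Type*} (verts : Set V) (adj : V → V → Prop) (v : V) : Prop :=
  v ∈ verts ∧ outdeg adj v = 0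

/-- A tree vertex: indegree 1 and outdegree 2. -/
def IsTreeVertex {V : Type*} (adj : V → V → Prop) (v : V) : Prop :=
  indeg adj v = 1 ∧ outdeg adj v = 2

/-- A reticulation: indegree 2 and outdegree 1. -/
def IsReticulation {V : Type*} (adj : V → V → Prop) (v : V) : Prop :=
  indeg adj v = 2 ∧ outdeg adj v = 1

/-- `l` is a directed path from `a` to `b`: a nonempty list of vertices starting
at `a`, ending at `b`, each consecutive pair joined by an edge. -/
def IsPathFromTo {V : Type*} (adj : V → V → Prop) (l : List V) (a b : V) : Prop :=
  l.Chain' adj ∧ l.head? = some a ∧ l.getLast? = some b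

/-- A binary phylogenetic network: a finite DAG with a unique root (the only
vertex of indegree 0) of outdegree 2, in which every vertex is reachable from
the root, every leaf has indegree 1, and every other non-root vertex is either
a tree vertex or a reticulation. -/
structure IsBinaryNetwork {V : Type*} (verts : Set V) (adj : V → V → Prop) (root : V) : Prop where
  finite_verts : verts.Finite
  root_mem : root ∈ verts
  adj_mem : ∀ ⦃u v : V⦄, adj u v → u ∈ verts ∧ v ∈ verts
  acyclic : ∀ v : V, ¬ Relation.TransGen adj v v
  root_indeg : indeg adj root = 0
  root_outdeg : outdeg adj root = 2
  root_unique : ∀ v ∈ verts, indeg adj v = 0 → v = root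
  reach : ∀ v ∈ verts, Relation.ReflTransGen adj root v
  leaf_indeg : ∀ v ∈ verts, outdeg adj v = 0 → indeg adj v = 1
  internal_deg : ∀ v ∈ verts, v ≠ root → outdeg adj v ≠ 0 →
      IsTreeVertex adj v ∨ IsReticulation adj v

/-- `x` is stable: there is a leaf `ℓ` such that `x` lies on every directed
path from the root to `ℓ`. -/
def Stable {V : Type*} (verts : Set V) (adj : V → V → Prop) (root x : V) : Prop :=
  ∃ ℓ, IsLeaf verts adj ℓ ∧ ∀ l : List V, IsPathFromTo adj l root ℓ → x ∈ l

/-- A network is reticulation-visible if every reticulation is stable. -/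
def ReticulationVisible {V : Type*} (verts : Set V) (adj : V → V → Prop) (root : V) : Prop :=
  ∀ v ∈ verts, IsReticulation adj v → Stable verts adj root v

/-- A network is nearly stable if every vertex is stable or all of its parents
are stable. -/
def NearlyStable {V : Type*} (verts : Set V) (adj : V → V → Prop) (root : V) : Prop :=
  ∀ v ∈ verts, Stable verts adj root v ∨ ∀ p : V, adj p v → Stable verts adj root p

/-- `M` (a DAG with vertex set `vertsM` and adjacency `adjM`) displays the
binary phylogenetic tree `T` (with vertex set `vertsT` and adjacency `adjT`,
whose leaf set equals that of `M`): there are an injective map `φ` from the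
vertices of `T` into the vertices of `M` fixing every leaf, and for each edge
`(a, b)` of `T` a directed path `P a b` in `M` from `φ a` to `φ b`, such that
two distinct such paths share no vertices other than common endpoints in the
image of `φ`, and no internal vertex of any path lies in the image of `φ`. -/
def Displays {V : Type*} (vertsM : Set V) (adjM : V → V → Prop)
    (vertsT : Set V) (adjT : V → V → Prop) : Prop :=
  ∃ (φ : V → V) (P : V → V → List V),
    Set.MapsTo φ vertsT vertsM ∧
    Set.InjOn φ vertsT ∧
    (∀ ℓ : V, IsLeaf vertsT adjT ℓ → φ ℓ = ℓ) ∧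
    (∀ a b : V, adjT a b → IsPathFromTo adjM (P a b) (φ a) (φ b)) ∧
    (∀ a b : V, adjT a b → ∀ x ∈ (P a b).tail.dropLast, x ∉ φ '' vertsT) ∧
    (∀ a b a' b' : V, adjT a b → adjT a' b' → (a, b) ≠ (a', b') →
      ∀ x : V, x ∈ P a b → x ∈ P a' b' →
        (x = φ a ∨ x = φ b) ∧ (x = φ a' ∨ x = φ b'))



section ListHelpers
variable {V : Type*}

private lemma mem_iff_idx {l : List V} {x : V} : x ∈ l ↔ ∃ i : ℕ, l[i]? = some x := by
  constructor
  · intro h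
    obtain ⟨n, hn, he⟩ := List.mem_iff_getElem.1 h
    exact ⟨n, by rw [List.getElem?_eq_getElem hn, he]⟩
  · rintro ⟨i, hi⟩
    obtain ⟨h, he⟩ := List.getElem?_eq_some_iff.1 hi
    exact he ▸ List.getElem_mem h

private lemma idx_lt_length {l : List V} {x : V} {i : ℕ} (h : l[i]? = some x) : i < l.length :=
  (List.getElem?_eq_some_iff.1 h).1

private lemma chain_step {R : V → V → Prop} {l : List V} (hc : l.Chain' R) {i : ℕ} {x y : V}
    (hx : l[i]? = some x) (hy : l[i+1]? = some y) : R x y := by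
  obtain ⟨hiy, hey⟩ := List.getElem?_eq_some_iff.1 hy
  obtain ⟨hix, hex⟩ := List.getElem?_eq_some_iff.1 hx
  have := List.isChain_iff_getElem.1 hc i (by omega)
  simpa [List.get_eq_getElem, hex, hey] using this

private lemma chain_of_steps {R : V → V → Prop} {l : List V}
    (h : ∀ i x y, l[i]? = some x → l[i+1]? = some y → R x y) : l.Chain' R := by
  refine List.isChain_iff_getElem.2 ?_
  intro i hi
  exact h i _ _ (List.getElem?_eq_getElem (by omega)) (List.getElem?_eq_getElem (by omega))

private lemma chain_nodup {adj : V → V → Prop} (hacyc : ∀ v : V, ¬ Relation.TransGen adj v v)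
    {l : List V} (h : l.Chain' adj) : l.Nodup := by
  have h2 : l.Chain' (Relation.TransGen adj) := List.IsChain.imp (fun a b hab => Relation.TransGen.single hab) h
  have h3 : l.Pairwise (Relation.TransGen adj) := by
    rw [← List.isChain_iff_pairwise]; exact h2
  exact h3.imp (fun {a b} hab => fun he => by subst he; exact hacyc a hab)

private lemma nodup_idx {l : List V} (h : l.Nodup) {i j : ℕ} {x : V}
    (hi : l[i]? = some x) (hj : l[j]? = some x) : i = j := by
  obtain ⟨hi1, hi2⟩ := List.getElem?_eq_some_iff.1 hi
  obtain ⟨hj1, hj2⟩ := List.getElem?_eq_some_iff.1 hj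
  exact (List.Nodup.getElem_inj_iff h).1 (by rw [hi2, hj2])

private lemma interior_idx {l : List V} {x : V} {i : ℕ} (h : l[i]? = some x)
    (h0 : 0 < i) (h1 : i < l.length - 1) : x ∈ l.tail.dropLast := by
  obtain ⟨hi, he⟩ := List.getElem?_eq_some_iff.1 h
  obtain ⟨j, rfl⟩ : ∃ j, i = j + 1 := ⟨i - 1, by omega⟩
  have hlen : j < l.tail.dropLast.length := by
    simp [List.length_dropLast, List.length_tail]; omega
  have : l.tail.dropLast[j]'hlen = x := by
    rw [List.getElem_dropLast, List.getElem_tail]; exact he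
  exact this ▸ List.getElem_mem hlen

private lemma interior_idx_rev {l : List V} {x : V} (h : x ∈ l.tail.dropLast) :
    ∃ i, 0 < i ∧ i < l.length - 1 ∧ l[i]? = some x := by
  obtain ⟨j, hj, he⟩ := List.mem_iff_getElem.1 h
  have hj' : j < l.length - 2 := by
    simp [List.length_dropLast, List.length_tail] at hj; omega
  refine ⟨j + 1, by omega, by omega, ?_⟩
  rw [List.getElem_dropLast, List.getElem_tail] at he
  rw [List.getElem?_eq_getElem (by omega)]
  exact congrArg some he

private lemma dropLast_idx {l : List V} {i : ℕ} (h : i < l.length - 1) :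
    (l.dropLast)[i]? = l[i]? := by
  have h1 : i < l.dropLast.length := by simp [List.length_dropLast]; omega
  rw [List.getElem?_eq_getElem h1, List.getElem?_eq_getElem (by omega : i < l.length),
    List.getElem_dropLast]

private lemma list_eq_three {l : List V} (h : l.length = 3) :
    ∃ a b c, l = [a, b, c] := by
  match l, h with
  | [a, b, c], _ => exact ⟨a, b, c, rfl⟩

private lemma list_eq_four {l : List V} (h : l.length = 4) :
    ∃ a b c d, l = [a, b, c, d] := by
  match l, h with
  | [a, b, c, d], _ => exact ⟨a, b, c, d, rfl⟩

private lemma chain_transGen {adj : V → V → Prop} {l : List V} (hc : l.Chain' adj)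
    {i j : ℕ} {x y : V} (hx : l[i]? = some x) (hy : l[j]? = some y) (hij : i < j) :
    Relation.TransGen adj x y := by
  obtain ⟨k, rfl⟩ : ∃ k, j = i + (k + 1) := ⟨j - i - 1, by omega⟩
  clear hij
  induction k generalizing y with
  | zero => exact Relation.TransGen.single (chain_step hc hx hy)
  | succ n ih =>
    have hjlt := idx_lt_length hy
    have hmid : ∃ z, l[i + (n+1)]? = some z := by
      rw [List.getElem?_eq_getElem (by omega)]; exact ⟨_, rfl⟩
    obtain ⟨z, hz⟩ := hmid
    exact (ih hz).tail (chain_step hc hz (by rw [show i + (n+1) + 1 = i + (n+1+1) from by omega]; exact hy))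

end ListHelpers

section SetHelpers
variable {V : Type*}

private lemma set_card_one {s : Set V} {a b : V} (h : s.ncard = 1) (ha : a ∈ s) (hb : b ∈ s) :
    a = b := by
  obtain ⟨x, rfl⟩ := Set.ncard_eq_one.1 h
  rw [Set.mem_singleton_iff] at ha hb; rw [ha, hb]

private lemma set_card_two_mem {s : Set V} {a b c : V} (h : s.ncard = 2) (hab : a ≠ b)
    (ha : a ∈ s) (hb : b ∈ s) (hc : c ∈ s) : c = a ∨ c = b := by
  have hfin : s.Finite := by
    by_contra hinf
    rw [Set.Infinite.ncard (fun hf => hinf hf)] at h; omega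
  have : ({a, b} : Set V) = s := by
    apply Set.eq_of_subset_of_ncard_le
    · intro x hx; rcases hx with rfl | hx
      · exact ha
      · rw [Set.mem_singleton_iff] at hx; exact hx ▸ hb
    · rw [h, Set.ncard_pair hab]
    · exact hfin
  rw [← this] at hc
  rcases hc with rfl | hc
  · exact Or.inl rfl
  · exact Or.inr (Set.mem_singleton_iff.1 hc)

private lemma set_card_two_exists {s : Set V} (h : s.ncard = 2) :
    ∃ a b, a ≠ b ∧ a ∈ s ∧ b ∈ s := by
  obtain ⟨a, b, hab, rfl⟩ := Set.ncard_eq_two.1 h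
  exact ⟨a, b, hab, by simp, by simp⟩

private lemma set_card_zero_empty {s : Set V} (h : s.ncard = 0) (hfin : s.Finite) {a : V}
    (ha : a ∈ s) : False := by
  rw [(Set.ncard_eq_zero hfin).1 h] at ha; exact ha

private lemma set_card_one_exists {s : Set V} (h : s.ncard = 1) : ∃ a, a ∈ s := by
  obtain ⟨x, rfl⟩ := Set.ncard_eq_one.1 h
  exact ⟨x, rfl⟩

end SetHelpers

private lemma or2_flip {V : Type*} {x b1 b2 : V} (h : x = b1 ∨ x = b2) :
    b1 = x ∨ b2 = x := by tauto

private lemma or4_flip {V : Type*} {x b1 b2 b3 b4 : V} (h : x = b1 ∨ x = b2 ∨ x = b3 ∨ x = b4) :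
    b1 = x ∨ b2 = x ∨ b3 = x ∨ b4 = x := by tauto

private lemma path_eq_three {V : Type*} {l : List V} {x y z : V} (h3 : l.length = 3)
    (h0 : l[l.length - 3]? = some x) (h1 : l[l.length - 2]? = some y)
    (h2 : l[l.length - 1]? = some z) : l = [x, y, z] := by
  obtain ⟨a, b, c, rfl⟩ := list_eq_three h3
  simp at h0 h1 h2
  rw [h0, h1, h2]

private lemma path_eq_four {V : Type*} {l : List V} {x y z t : V} (h4 : l.length = 4)
    (h0 : l[l.length - 4]? = some x) (h1 : l[l.length - 3]? = some y)
    (h2 : l[l.length - 2]? = some z) (h3 : l[l.length - 1]? = some t) : l = [x, y, z, t] := by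
  obtain ⟨a, b, c, d, rfl⟩ := list_eq_four h4
  simp at h0 h1 h2 h3
  rw [h0, h1, h2, h3]

section PathHelpers
variable {V : Type*} {adj : V → V → Prop} {l : List V} {a b : V}

private lemma path_len (h : IsPathFromTo adj l a b) : 0 < l.length := by
  rcases l with _ | ⟨x, t⟩
  · exact absurd h.2.1 (by simp)
  · simp

private lemma path_first (h : IsPathFromTo adj l a b) : l[0]? = some a := by
  rw [← List.head?_eq_getElem?]; exact h.2.1

private lemma path_last (h : IsPathFromTo adj l a b) : l[l.length - 1]? = some b := by
  rw [← List.getLast?_eq_getElem?]; exact h.2.2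

private lemma path_mk (h0 : 0 < l.length) (hc : l.Chain' adj) (ha : l[0]? = some a)
    (hb : l[l.length - 1]? = some b) : IsPathFromTo adj l a b :=
  ⟨hc, by rw [List.head?_eq_getElem?]; exact ha, by rw [List.getLast?_eq_getElem?]; exact hb⟩

end PathHelpers

/-- Theorem 3(iii): with `w` a tree vertex whose children `u, g` are tree
vertices, reticulations `v, e` such that the children of `u` and of `g` are
`v` and `e`, the child of `v` the leaf `ℓ` and the child of `e` the leaf `ℓ'`,
if `N` displays `T` then the network obtained by deleting the edges `(u, e)`
and `(g, v)` displays `T`. -/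
theorem tcp_case_E {V : Type*}
    (vertsN : Set V) (adjN : V → V → Prop) (rootN : V)
    (vertsT : Set V) (adjT : V → V → Prop) (rootT : V)
    (hN : IsBinaryNetwork vertsN adjN rootN)
    (hNS : NearlyStable vertsN adjN rootN)
    (hT : IsBinaryNetwork vertsT adjT rootT)
    (hTtree : ∀ x : V, ¬ IsReticulation adjT x)
    (hleaves : {x : V | IsLeaf vertsT adjT x} = {x : V | IsLeaf vertsN adjN x})
    (w u g v e ℓ ℓ' : V)
    (hw : IsTreeVertex adjN w) (hwu : adjN w u) (hwg : adjN w g) (hug : u ≠ g)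
    (hu : IsTreeVertex adjN u) (hg : IsTreeVertex adjN g)
    (hv : IsReticulation adjN v) (he : IsReticulation adjN e) (hve : v ≠ e)
    (huv : adjN u v) (hue : adjN u e) (hge : adjN g e) (hgv : adjN g v)
    (hvl : adjN v ℓ) (hl : IsLeaf vertsN adjN ℓ)
    (hel : adjN e ℓ') (hl' : IsLeaf vertsN adjN ℓ')
    (hdisp : Displays vertsN adjN vertsT adjT) :
    Displays vertsN
      (fun x y => adjN x y ∧ ¬ (x = u ∧ y = e) ∧ ¬ (x = g ∧ y = v))
      vertsT adjT := by
  classical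
  obtain ⟨φ, P, hmap, hinj, hlf, hpath, hint, hdisj⟩ := hdisp
  -- finiteness of neighbour sets
  have hfinNout : ∀ x : V, {y | adjN x y}.Finite :=
    fun x => hN.finite_verts.subset (fun y hy => (hN.adj_mem hy).2)
  have hfinNin : ∀ x : V, {y | adjN y x}.Finite :=
    fun x => hN.finite_verts.subset (fun y hy => (hN.adj_mem hy).1)
  have hfinTout : ∀ x : V, {y | adjT x y}.Finite :=
    fun x => hT.finite_verts.subset (fun y hy => (hT.adj_mem hy).2)
  have hfinTin : ∀ x : V, {y | adjT y x}.Finite :=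
    fun x => hT.finite_verts.subset (fun y hy => (hT.adj_mem hy).1)
  have hnooutN : ∀ x : V, outdeg adjN x = 0 → ∀ y, ¬ adjN x y :=
    fun x hx y hy => set_card_zero_empty hx (hfinNout x) hy
  have hnooutT : ∀ x : V, outdeg adjT x = 0 → ∀ y, ¬ adjT x y :=
    fun x hx y hy => set_card_zero_empty hx (hfinTout x) hy
  -- neighbour characterisations in N
  have houtU : ∀ c, adjN u c → c = v ∨ c = e := fun c hc => set_card_two_mem hu.2 hve huv hue hc
  have houtG : ∀ c, adjN g c → c = v ∨ c = e := fun c hc => set_card_two_mem hg.2 hve hgv hge hc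
  have houtW : ∀ c, adjN w c → c = u ∨ c = g := fun c hc => set_card_two_mem hw.2 hug hwu hwg hc
  have houtV : ∀ c, adjN v c → c = ℓ := fun c hc => set_card_one hv.2 hc hvl
  have houtE : ∀ c, adjN e c → c = ℓ' := fun c hc => set_card_one he.2 hc hel
  have hinV : ∀ c, adjN c v → c = u ∨ c = g := fun c hc => set_card_two_mem hv.1 hug huv hgv hc
  have hinE : ∀ c, adjN c e → c = u ∨ c = g := fun c hc => set_card_two_mem he.1 hug hue hge hc
  have hinU : ∀ c, adjN c u → c = w := fun c hc => set_card_one hu.1 hc hwu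
  have hinG : ∀ c, adjN c g → c = w := fun c hc => set_card_one hg.1 hc hwg
  have hinL : ∀ c, adjN c ℓ → c = v :=
    fun c hc => set_card_one (hN.leaf_indeg ℓ hl.1 hl.2) hc hvl
  have hinL' : ∀ c, adjN c ℓ' → c = e :=
    fun c hc => set_card_one (hN.leaf_indeg ℓ' hl'.1 hl'.2) hc hel
  -- distinctness
  have neadjN : ∀ {a b : V}, adjN a b → a ≠ b :=
    fun h heq => hN.acyclic _ (by rw [heq] at h; exact Relation.TransGen.single h)
  have neTGN : ∀ {a b : V}, Relation.TransGen adjN a b → a ≠ b :=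
    fun h heq => hN.acyclic _ (by rw [heq] at h; exact h)
  have nwu : w ≠ u := neadjN hwu
  have nwg : w ≠ g := neadjN hwg
  have nwv : w ≠ v := neTGN (Relation.TransGen.head hwu (Relation.TransGen.single huv))
  have nwe : w ≠ e := neTGN (Relation.TransGen.head hwu (Relation.TransGen.single hue))
  have nwl : w ≠ ℓ :=
    neTGN (Relation.TransGen.head hwu ((Relation.TransGen.single huv).tail hvl))
  have nwl' : w ≠ ℓ' :=
    neTGN (Relation.TransGen.head hwu ((Relation.TransGen.single hue).tail hel))
  have nuv : u ≠ v := neadjN huv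
  have nue : u ≠ e := neadjN hue
  have nul : u ≠ ℓ := neTGN ((Relation.TransGen.single huv).tail hvl)
  have nul' : u ≠ ℓ' := neTGN ((Relation.TransGen.single hue).tail hel)
  have ngv : g ≠ v := neadjN hgv
  have nge : g ≠ e := neadjN hge
  have ngl : g ≠ ℓ := neTGN ((Relation.TransGen.single hgv).tail hvl)
  have ngl' : g ≠ ℓ' := neTGN ((Relation.TransGen.single hge).tail hel)
  have nvl : v ≠ ℓ := neadjN hvl
  have nel' : e ≠ ℓ' := neadjN hel
  have nvl' : v ≠ ℓ' := fun h => hnooutN ℓ' hl'.2 ℓ (h ▸ hvl)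
  have nel : e ≠ ℓ := fun h => hnooutN ℓ hl.2 ℓ' (h ▸ hel)
  have nll' : ℓ ≠ ℓ' := fun h => hve (hinL e (by rw [h]; exact hel)).symm
  -- leaves of T
  have hlT : IsLeaf vertsT adjT ℓ := by
    have h1 : ℓ ∈ {x | IsLeaf vertsN adjN x} := hl
    rw [← hleaves] at h1; exact h1
  have hl'T : IsLeaf vertsT adjT ℓ' := by
    have h1 : ℓ' ∈ {x | IsLeaf vertsN adjN x} := hl'
    rw [← hleaves] at h1; exact h1
  have hφl : φ ℓ = ℓ := hlf ℓ hlT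
  have hφl' : φ ℓ' = ℓ' := hlf ℓ' hl'T
  have hTleafN : ∀ x, IsLeaf vertsT adjT x → IsLeaf vertsN adjN x := fun x hx => by
    have h1 : x ∈ {y | IsLeaf vertsT adjT y} := hx
    rw [hleaves] at h1; exact h1
  have neadjT : ∀ {a b : V}, adjT a b → a ≠ b :=
    fun h heq => hT.acyclic _ (by rw [heq] at h; exact Relation.TransGen.single h)
  have hTparent : ∀ {x a b : V}, adjT a x → adjT b x → a = b := by
    intro x a b ha hb
    have hx : x ∈ vertsT := (hT.adj_mem ha).2
    have hxr : x ≠ rootT := by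
      intro hxe
      rw [hxe] at ha
      exact set_card_zero_empty hT.root_indeg (hfinTin rootT) ha
    have h1 : indeg adjT x = 1 := by
      by_cases hleaf : outdeg adjT x = 0
      · exact hT.leaf_indeg x hx hleaf
      · rcases hT.internal_deg x hx hxr hleaf with h2 | h2
        · exact h2.1
        · exact absurd h2 (hTtree x)
    exact set_card_one h1 ha hb
  have hToutdeg2 : ∀ x, x ∈ vertsT → ¬ IsLeaf vertsT adjT x → outdeg adjT x = 2 := by
    intro x hx hnl
    have hne0 : outdeg adjT x ≠ 0 := fun h0 => hnl ⟨hx, h0⟩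
    by_cases hr : x = rootT
    · rw [hr]; exact hT.root_outdeg
    · rcases hT.internal_deg x hx hr hne0 with h2 | h2
      · exact h2.2
      · exact absurd h2 (hTtree x)
  have hTchild : ∀ x, x ∈ vertsT → ¬ IsLeaf vertsT adjT x →
      ∃ c1 c2, c1 ≠ c2 ∧ adjT x c1 ∧ adjT x c2 := by
    intro x hx hnl
    obtain ⟨c1, c2, h12, h1, h2⟩ := set_card_two_exists (hToutdeg2 x hx hnl)
    exact ⟨c1, c2, h12, h1, h2⟩
  -- parents of the two leaves in T
  obtain ⟨pl, hpl⟩ : ∃ a, adjT a ℓ := set_card_one_exists (hT.leaf_indeg ℓ hlT.1 hlT.2)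
  obtain ⟨pl', hpl'⟩ : ∃ a, adjT a ℓ' := set_card_one_exists (hT.leaf_indeg ℓ' hl'T.1 hl'T.2)
  have hplT : pl ∈ vertsT := (hT.adj_mem hpl).1
  have hpl'T : pl' ∈ vertsT := (hT.adj_mem hpl').1
  -- generic path facts
  have hPlen : ∀ a b, adjT a b → 0 < (P a b).length := fun a b h => path_len (hpath a b h)
  have hPfst : ∀ a b, adjT a b → (P a b)[0]? = some (φ a) :=
    fun a b h => path_first (hpath a b h)
  have hPlst : ∀ a b, adjT a b → (P a b)[(P a b).length - 1]? = some (φ b) :=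
    fun a b h => path_last (hpath a b h)
  have hPchain : ∀ a b, adjT a b → (P a b).Chain' adjN := fun a b h => (hpath a b h).1
  have hPnodup : ∀ a b, adjT a b → (P a b).Nodup :=
    fun a b h => chain_nodup hN.acyclic (hPchain a b h)
  have hPlen2 : ∀ a b, adjT a b → 2 ≤ (P a b).length := by
    intro a b h
    by_contra hlt
    have h1 : (P a b).length = 1 := by have := hPlen a b h; omega
    have h2 := hPfst a b h
    have h3 := hPlst a b h
    rw [h1] at h3
    norm_num at h3
    rw [h2] at h3
    have hab : a = b := hinj (hT.adj_mem h).1 (hT.adj_mem h).2 (Option.some.inj h3)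
    exact neadjT h hab
  have hPim : ∀ {c : V}, c ∈ vertsT → φ c ∈ φ '' vertsT := fun hc => ⟨_, hc, rfl⟩
  have hPint : ∀ a b, adjT a b → ∀ {i : ℕ} {x : V}, (P a b)[i]? = some x → 0 < i →
      i < (P a b).length - 1 → x ∉ φ '' vertsT := by
    intro a b h i x hx h0 h1
    exact hint a b h _ (interior_idx hx h0 h1)
  -- membership lemmas for the key vertices
  have hMemL : ∀ a b, adjT a b → ∀ i, (P a b)[i]? = some ℓ → b = ℓ ∧ i = (P a b).length - 1 := by
    intro a b h i hi
    have hilt := idx_lt_length hi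
    by_cases hlast : i = (P a b).length - 1
    · subst hlast
      have h2 := hPlst a b h
      rw [h2] at hi
      have hb : φ b = ℓ := Option.some.inj hi
      exact ⟨hinj (hT.adj_mem h).2 hlT.1 (by rw [hb, hφl]), rfl⟩
    · exfalso
      by_cases h0 : i = 0
      · subst h0
        have h2 := hPfst a b h
        rw [h2] at hi
        have ha : φ a = ℓ := Option.some.inj hi
        have haa : a = ℓ := hinj (hT.adj_mem h).1 hlT.1 (by rw [ha, hφl])
        exact hnooutT ℓ hlT.2 b (haa ▸ h)
      · exact hPint a b h hi (by omega) (by omega) (by rw [← hφl]; exact hPim hlT.1)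
  have hMemL' : ∀ a b, adjT a b → ∀ i, (P a b)[i]? = some ℓ' →
      b = ℓ' ∧ i = (P a b).length - 1 := by
    intro a b h i hi
    have hilt := idx_lt_length hi
    by_cases hlast : i = (P a b).length - 1
    · subst hlast
      have h2 := hPlst a b h
      rw [h2] at hi
      have hb : φ b = ℓ' := Option.some.inj hi
      exact ⟨hinj (hT.adj_mem h).2 hl'T.1 (by rw [hb, hφl']), rfl⟩
    · exfalso
      by_cases h0 : i = 0
      · subst h0
        have h2 := hPfst a b h
        rw [h2] at hi
        have ha : φ a = ℓ' := Option.some.inj hi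
        have haa : a = ℓ' := hinj (hT.adj_mem h).1 hl'T.1 (by rw [ha, hφl'])
        exact hnooutT ℓ' hl'T.2 b (haa ▸ h)
      · exact hPint a b h hi (by omega) (by omega) (by rw [← hφl']; exact hPim hl'T.1)
  have hMemLm : ∀ a b, adjT a b → ℓ ∈ P a b → b = ℓ := by
    intro a b h hm
    obtain ⟨i, hi⟩ := mem_iff_idx.1 hm
    exact (hMemL a b h i hi).1
  have hMemL'm : ∀ a b, adjT a b → ℓ' ∈ P a b → b = ℓ' := by
    intro a b h hm
    obtain ⟨i, hi⟩ := mem_iff_idx.1 hm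
    exact (hMemL' a b h i hi).1
  have hImDegLeaf : ∀ c, c ∈ vertsT → IsLeaf vertsT adjT c → outdeg adjN (φ c) = 0 := by
    intro c hc hcl
    rw [hlf c hcl]
    exact (hTleafN c hcl).2
  have hImV : ∀ c, c ∈ vertsT → φ c ≠ v := by
    intro c hc hcv
    by_cases hcl : IsLeaf vertsT adjT c
    · have h2 := hImDegLeaf c hc hcl
      rw [hcv] at h2
      have := hv.2; omega
    · obtain ⟨c1, c2, h12, hc1, hc2⟩ := hTchild c hc hcl
      have key : ∀ d, adjT c d → d = ℓ := by
        intro d hd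
        have h2 := hPlen2 c d hd
        obtain ⟨z, hz⟩ : ∃ z, (P c d)[1]? = some z :=
          ⟨_, List.getElem?_eq_getElem (by omega)⟩
        have hadj : adjN v z := by
          have h3 := chain_step (hPchain c d hd) (hPfst c d hd) hz
          rw [hcv] at h3; exact h3
        have hzl : z = ℓ := houtV z hadj
        rw [hzl] at hz
        exact (hMemL c d hd 1 hz).1
      exact h12 ((key c1 hc1).trans (key c2 hc2).symm)
  have hImE : ∀ c, c ∈ vertsT → φ c ≠ e := by
    intro c hc hcv
    by_cases hcl : IsLeaf vertsT adjT c
    · have h2 := hImDegLeaf c hc hcl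
      rw [hcv] at h2
      have := he.2; omega
    · obtain ⟨c1, c2, h12, hc1, hc2⟩ := hTchild c hc hcl
      have key : ∀ d, adjT c d → d = ℓ' := by
        intro d hd
        have h2 := hPlen2 c d hd
        obtain ⟨z, hz⟩ : ∃ z, (P c d)[1]? = some z :=
          ⟨_, List.getElem?_eq_getElem (by omega)⟩
        have hadj : adjN e z := by
          have h3 := chain_step (hPchain c d hd) (hPfst c d hd) hz
          rw [hcv] at h3; exact h3
        have hzl : z = ℓ' := houtE z hadj
        rw [hzl] at hz
        exact (hMemL' c d hd 1 hz).1
      exact h12 ((key c1 hc1).trans (key c2 hc2).symm)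
  have hMemV : ∀ a b, adjT a b → v ∈ P a b → b = ℓ := by
    intro a b h hm
    obtain ⟨i, hi⟩ := mem_iff_idx.1 hm
    have hilt := idx_lt_length hi
    by_cases hlast : i = (P a b).length - 1
    · subst hlast
      rw [hPlst a b h] at hi
      exact absurd (Option.some.inj hi) (hImV b (hT.adj_mem h).2)
    · obtain ⟨z, hz⟩ : ∃ z, (P a b)[i+1]? = some z :=
        ⟨_, List.getElem?_eq_getElem (by omega)⟩
      have hzl : z = ℓ := houtV z (chain_step (hPchain a b h) hi hz)
      rw [hzl] at hz
      exact (hMemL a b h (i+1) hz).1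
  have hMemE : ∀ a b, adjT a b → e ∈ P a b → b = ℓ' := by
    intro a b h hm
    obtain ⟨i, hi⟩ := mem_iff_idx.1 hm
    have hilt := idx_lt_length hi
    by_cases hlast : i = (P a b).length - 1
    · subst hlast
      rw [hPlst a b h] at hi
      exact absurd (Option.some.inj hi) (hImE b (hT.adj_mem h).2)
    · obtain ⟨z, hz⟩ : ∃ z, (P a b)[i+1]? = some z :=
        ⟨_, List.getElem?_eq_getElem (by omega)⟩
      have hzl : z = ℓ' := houtE z (chain_step (hPchain a b h) hi hz)
      rw [hzl] at hz
      exact (hMemL' a b h (i+1) hz).1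
  have houtWC : ∀ c, adjN w c → ((∀ d, adjN c d → d = v ∨ d = e) ∧ outdeg adjN c = 2) := by
    intro c hc
    rcases houtW c hc with rfl | rfl
    · exact ⟨houtU, hu.2⟩
    · exact ⟨houtG, hg.2⟩
  -- structure of the path into ℓ
  have hA2 := hPlen2 pl ℓ hpl
  have hAlast : (P pl ℓ)[(P pl ℓ).length - 1]? = some ℓ := by rw [hPlst pl ℓ hpl, hφl]
  obtain ⟨v2, hv2⟩ : ∃ z, (P pl ℓ)[(P pl ℓ).length - 2]? = some z :=
    ⟨_, List.getElem?_eq_getElem (by omega)⟩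
  have hAv : v2 = v := by
    apply hinL v2
    have h3 := chain_step (hPchain pl ℓ hpl) hv2
      (by rw [show (P pl ℓ).length - 2 + 1 = (P pl ℓ).length - 1 from by omega]; exact hAlast)
    exact h3
  rw [hAv] at hv2; clear hAv
  have hA3 : 3 ≤ (P pl ℓ).length := by
    by_contra hlt
    have hl2 : (P pl ℓ).length = 2 := by omega
    rw [hl2] at hv2
    norm_num at hv2
    have := hPfst pl ℓ hpl
    rw [this] at hv2
    exact hImV pl hplT (Option.some.inj hv2)
  obtain ⟨xA, hxA⟩ : ∃ z, (P pl ℓ)[(P pl ℓ).length - 3]? = some z :=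
    ⟨_, List.getElem?_eq_getElem (by omega)⟩
  have hxAug : xA = u ∨ xA = g := by
    apply hinV xA
    exact chain_step (hPchain pl ℓ hpl) hxA
      (by rw [show (P pl ℓ).length - 3 + 1 = (P pl ℓ).length - 2 from by omega]; exact hv2)
  -- structure of the path into ℓ'
  have hB2 := hPlen2 pl' ℓ' hpl'
  have hBlast : (P pl' ℓ')[(P pl' ℓ').length - 1]? = some ℓ' := by rw [hPlst pl' ℓ' hpl', hφl']
  obtain ⟨e2, he2⟩ : ∃ z, (P pl' ℓ')[(P pl' ℓ').length - 2]? = some z :=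
    ⟨_, List.getElem?_eq_getElem (by omega)⟩
  have hBe : e2 = e := by
    apply hinL' e2
    exact chain_step (hPchain pl' ℓ' hpl') he2
      (by rw [show (P pl' ℓ').length - 2 + 1 = (P pl' ℓ').length - 1 from by omega]; exact hBlast)
  rw [hBe] at he2; clear hBe
  have hB3 : 3 ≤ (P pl' ℓ').length := by
    by_contra hlt
    have hl2 : (P pl' ℓ').length = 2 := by omega
    rw [hl2] at he2
    norm_num at he2
    have := hPfst pl' ℓ' hpl'
    rw [this] at he2
    exact hImE pl' hpl'T (Option.some.inj he2)
  obtain ⟨xB, hxB⟩ : ∃ z, (P pl' ℓ')[(P pl' ℓ').length - 3]? = some z :=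
    ⟨_, List.getElem?_eq_getElem (by omega)⟩
  have hxBug : xB = u ∨ xB = g := by
    apply hinE xB
    exact chain_step (hPchain pl' ℓ' hpl') hxB
      (by rw [show (P pl' ℓ').length - 3 + 1 = (P pl' ℓ').length - 2 from by omega]; exact he2)
  have main_common : ∀ p : V, adjT p ℓ → adjT p ℓ' →
      ∀ L : V → List V,
      (∀ a, adjT a p →
        IsPathFromTo (fun x y => adjN x y ∧ ¬ (x = u ∧ y = e) ∧ ¬ (x = g ∧ y = v))
          (L a) (φ a) w) →
      (∀ a, adjT a p → ∀ x, x ∈ L a → x ∈ P a p) →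
      (∀ a, adjT a p → ∀ x, x ∈ L a → x = φ p → x = w) →
      (∀ a, adjT a p → ∀ i : ℕ, (L a)[i]? = some w → i = (L a).length - 1) →
      (∀ a, adjT a p → u ∉ L a ∧ g ∉ L a) →
      (∀ a, adjT a p → ∀ x, x ∈ (L a).tail.dropLast → x ∉ φ '' vertsT) →
      (∀ c, c ∈ vertsT → φ c = w → c = p) →
      (∀ c, c ∈ vertsT → φ c = u → c = p) →
      (∀ c, c ∈ vertsT → φ c = g → c = p) →
      (∀ a b, adjT a b → ¬ (a = p ∧ b = ℓ) → ¬ (a = p ∧ b = ℓ') → b ≠ p →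
        w ∉ P a b ∧ u ∉ P a b ∧ g ∉ P a b) →
      Displays vertsN (fun x y => adjN x y ∧ ¬ (x = u ∧ y = e) ∧ ¬ (x = g ∧ y = v))
        vertsT adjT := by
    intro p hpℓ hpℓ' L hLpath hLsub hLphi hLw hLug hLint hW1 hImU hImG hFree
    have hpT : p ∈ vertsT := (hT.adj_mem hpℓ).1
    have hpnl : ¬ IsLeaf vertsT adjT p := fun h0 => hnooutT p h0.2 ℓ hpℓ
    have hpout : ∀ d, adjT p d → d = ℓ ∨ d = ℓ' :=
      fun d hd => set_card_two_mem (hToutdeg2 p hpT hpnl) nll' hpℓ hpℓ' hd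
    have hnpℓ : p ≠ ℓ := neadjT hpℓ
    have hnpℓ' : p ≠ ℓ' := neadjT hpℓ'
    have hwverts : w ∈ vertsN := (hN.adj_mem hwu).1
    set φ2 : V → V := fun x => if x = p then w else φ x with hφ2
    set P2 : V → V → List V := fun a b =>
        if a = p ∧ b = ℓ then [w, u, v, ℓ]
        else if a = p ∧ b = ℓ' then [w, g, e, ℓ']
        else if b = p then L a else P a b with hP2
    have hφ2p : φ2 p = w := by rw [hφ2]; simp
    have hφ2ne : ∀ x, x ≠ p → φ2 x = φ x := by intro x hx; rw [hφ2]; simp [hx]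
    have hP2A : P2 p ℓ = [w, u, v, ℓ] := by simp [hP2]
    have hP2B : P2 p ℓ' = [w, g, e, ℓ'] := by simp [hP2, Ne.symm nll']
    have hP2q : ∀ a, adjT a p → P2 a p = L a := by
      intro a ha
      simp [hP2, hnpℓ, hnpℓ']
    have hP2o : ∀ a b, adjT a b → ¬ (a = p ∧ b = ℓ) → ¬ (a = p ∧ b = ℓ') → b ≠ p →
        P2 a b = P a b := by
      intro a b hab h1 h2 h3
      simp [hP2, h1, h2, h3]
    have hcases : ∀ a b, adjT a b → (p = a ∧ ℓ = b) ∨ (p = a ∧ ℓ' = b) ∨ (p = b) ∨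
        (¬ (a = p ∧ b = ℓ) ∧ ¬ (a = p ∧ b = ℓ') ∧ b ≠ p) := by
      intro a b hab
      by_cases h1 : a = p ∧ b = ℓ
      · exact Or.inl ⟨h1.1.symm, h1.2.symm⟩
      · by_cases h2 : a = p ∧ b = ℓ'
        · exact Or.inr (Or.inl ⟨h2.1.symm, h2.2.symm⟩)
        · by_cases h3 : b = p
          · exact Or.inr (Or.inr (Or.inl h3.symm))
          · exact Or.inr (Or.inr (Or.inr ⟨h1, h2, h3⟩))
    have hanep : ∀ a b, adjT a b → ¬ (a = p ∧ b = ℓ) → ¬ (a = p ∧ b = ℓ') → a ≠ p := by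
      intro a b hab h1 h2 hap
      rcases hpout b (hap ▸ hab) with rfl | rfl
      · exact h1 ⟨hap, rfl⟩
      · exact h2 ⟨hap, rfl⟩
    have hchainA : List.Chain' (fun x y => adjN x y ∧ ¬ (x = u ∧ y = e) ∧ ¬ (x = g ∧ y = v))
        [w, u, v, ℓ] :=
      List.isChain_cons_cons.2 ⟨⟨hwu, fun h => nwu h.1, fun h => nwg h.1⟩,
        List.isChain_cons_cons.2 ⟨⟨huv, fun h => hve h.2, fun h => hug h.1⟩,
        List.isChain_cons_cons.2 ⟨⟨hvl, fun h => nuv h.1.symm, fun h => ngv h.1.symm⟩,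
        List.isChain_singleton ℓ⟩⟩⟩
    have hchainB : List.Chain' (fun x y => adjN x y ∧ ¬ (x = u ∧ y = e) ∧ ¬ (x = g ∧ y = v))
        [w, g, e, ℓ'] :=
      List.isChain_cons_cons.2 ⟨⟨hwg, fun h => nwu h.1, fun h => nwg h.1⟩,
        List.isChain_cons_cons.2 ⟨⟨hge, fun h => hug h.1.symm, fun h => hve h.2.symm⟩,
        List.isChain_cons_cons.2 ⟨⟨hel, fun h => nue h.1.symm, fun h => nge h.1.symm⟩,
        List.isChain_singleton ℓ'⟩⟩⟩
    refine ⟨φ2, P2, ?_, ?_, ?_, ?_, ?_, ?_⟩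
    · intro x hx
      by_cases hxp : x = p
      · rw [hxp]
        show φ2 p ∈ vertsN
        rw [hφ2p]; exact hwverts
      · show φ2 x ∈ vertsN
        rw [hφ2ne x hxp]; exact hmap hx
    · intro x hx y hy hxy
      by_cases hxp : x = p <;> by_cases hyp : y = p
      · rw [hxp, hyp]
      · rw [hxp, hφ2p, hφ2ne y hyp] at hxy
        exact absurd (hW1 y hy hxy.symm) hyp
      · rw [hyp, hφ2p, hφ2ne x hxp] at hxy
        exact absurd (hW1 x hx hxy) hxp
      · rw [hφ2ne x hxp, hφ2ne y hyp] at hxy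
        exact hinj hx hy hxy
    · intro z hz
      have hzp : z ≠ p := fun hq => hpnl (hq ▸ hz)
      rw [hφ2ne z hzp]
      exact hlf z hz
    · intro a b hab
      rcases hcases a b hab with ⟨hap, hbl⟩ | ⟨hap, hbl⟩ | hbp | ⟨h1, h2, h3⟩
      · subst hap; subst hbl
        rw [hP2A, hφ2p, hφ2ne ℓ (Ne.symm hnpℓ), hφl]
        exact ⟨hchainA, by rfl, by rfl⟩
      · subst hap; subst hbl
        rw [hP2B, hφ2p, hφ2ne ℓ' (Ne.symm hnpℓ'), hφl']
        exact ⟨hchainB, by rfl, by rfl⟩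
      · subst hbp
        rw [hP2q a hab, hφ2ne a (neadjT hab), hφ2p]
        exact hLpath a hab
      · rw [hP2o a b hab h1 h2 h3, hφ2ne a (hanep a b hab h1 h2), hφ2ne b h3]
        obtain ⟨hc, hh, hlst⟩ := hpath a b hab
        refine ⟨chain_of_steps ?_, hh, hlst⟩
        intro i x y hx hy
        refine ⟨chain_step hc hx hy, ?_, ?_⟩
        · rintro ⟨hxu, hye⟩
          rw [hxu] at hx
          exact (hFree a b hab h1 h2 h3).2.1 (mem_iff_idx.2 ⟨i, hx⟩)
        · rintro ⟨hxg, hyv⟩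
          rw [hxg] at hx
          exact (hFree a b hab h1 h2 h3).2.2 (mem_iff_idx.2 ⟨i, hx⟩)
    · intro a b hab x hx himg
      obtain ⟨c, hc, hφc⟩ := himg
      rcases hcases a b hab with ⟨hap, hbl⟩ | ⟨hap, hbl⟩ | hbp | ⟨h1, h2, h3⟩
      · subst hap; subst hbl
        rw [hP2A] at hx
        have hx' : u = x ∨ v = x := or2_flip (by simpa using hx)
        by_cases hcp : c = p
        · rw [hcp, hφ2p] at hφc
          rcases hx' with rfl | rfl
          · exact nwu hφc
          · exact nwv hφc
        · rw [hφ2ne c hcp] at hφc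
          rcases hx' with rfl | rfl
          · exact hcp (hImU c hc hφc)
          · exact hImV c hc hφc
      · subst hap; subst hbl
        rw [hP2B] at hx
        have hx' : g = x ∨ e = x := or2_flip (by simpa using hx)
        by_cases hcp : c = p
        · rw [hcp, hφ2p] at hφc
          rcases hx' with rfl | rfl
          · exact nwg hφc
          · exact nwe hφc
        · rw [hφ2ne c hcp] at hφc
          rcases hx' with rfl | rfl
          · exact hcp (hImG c hc hφc)
          · exact hImE c hc hφc
      · subst hbp
        rw [hP2q a hab] at hx
        by_cases hcp : c = p
        · rw [hcp, hφ2p] at hφc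
          obtain ⟨i, hi0, hi1, hidx⟩ := interior_idx_rev hx
          rw [← hφc] at hidx
          have := hLw a hab i hidx
          omega
        · rw [hφ2ne c hcp] at hφc
          exact hLint a hab x hx ⟨c, hc, hφc⟩
      · rw [hP2o a b hab h1 h2 h3] at hx
        by_cases hcp : c = p
        · rw [hcp, hφ2p] at hφc
          have hxm : x ∈ P a b :=
            List.Sublist.mem hx ((List.dropLast_sublist _).trans (List.tail_sublist _))
          exact (hFree a b hab h1 h2 h3).1 (by rw [hφc]; exact hxm)
        · rw [hφ2ne c hcp] at hφc
          exact hint a b hab x hx ⟨c, hc, hφc⟩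
    · have key : ∀ a b a' b', adjT a b → adjT a' b' → (a, b) ≠ (a', b') →
          ∀ x, x ∈ P2 a b → x ∈ P2 a' b' → x = φ2 a ∨ x = φ2 b := by
        intro a b a' b' hab ha'b' hne x hx hx'
        rcases hcases a b hab with ⟨hap, hbl⟩ | ⟨hap, hbl⟩ | hbp | ⟨h1, h2, h3⟩
        · subst hap; subst hbl
          rw [hP2A] at hx
          have hx4 : w = x ∨ u = x ∨ v = x ∨ ℓ = x := or4_flip (by simpa using hx)
          rcases hx4 with rfl | rfl | rfl | rfl
          · exact Or.inl hφ2p.symm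
          · exfalso
            rcases hcases a' b' ha'b' with ⟨hap', hbl'⟩ | ⟨hap', hbl'⟩ | hbp' | ⟨h1', h2', h3'⟩
            · exact hne (by rw [hap', hbl'])
            · subst hap'; subst hbl'
              rw [hP2B] at hx'
              have h4 : u = w ∨ u = g ∨ u = e ∨ u = ℓ' := by simpa using hx'
              rcases h4 with h | h | h | h
              exacts [nwu h.symm, hug h, nue h, nul' h]
            · subst hbp'
              rw [hP2q a' ha'b'] at hx'
              exact (hLug a' ha'b').1 hx'
            · rw [hP2o a' b' ha'b' h1' h2' h3'] at hx'
              exact (hFree a' b' ha'b' h1' h2' h3').2.1 hx'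
          · exfalso
            rcases hcases a' b' ha'b' with ⟨hap', hbl'⟩ | ⟨hap', hbl'⟩ | hbp' | ⟨h1', h2', h3'⟩
            · exact hne (by rw [hap', hbl'])
            · subst hap'; subst hbl'
              rw [hP2B] at hx'
              have h4 : v = w ∨ v = g ∨ v = e ∨ v = ℓ' := by simpa using hx'
              rcases h4 with h | h | h | h
              exacts [nwv h.symm, ngv h.symm, hve h, nvl' h]
            · subst hbp'
              rw [hP2q a' ha'b'] at hx'
              exact hnpℓ (hMemV a' p ha'b' (hLsub a' ha'b' v hx'))
            · rw [hP2o a' b' ha'b' h1' h2' h3'] at hx'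
              have hbl' : b' = ℓ := hMemV a' b' ha'b' hx'
              exact h1' ⟨hTparent (hbl' ▸ ha'b') hpℓ, hbl'⟩
          · right
            rw [hφ2ne ℓ (Ne.symm hnpℓ), hφl]
        · subst hap; subst hbl
          rw [hP2B] at hx
          have hx4 : w = x ∨ g = x ∨ e = x ∨ ℓ' = x := or4_flip (by simpa using hx)
          rcases hx4 with rfl | rfl | rfl | rfl
          · exact Or.inl hφ2p.symm
          · exfalso
            rcases hcases a' b' ha'b' with ⟨hap', hbl'⟩ | ⟨hap', hbl'⟩ | hbp' | ⟨h1', h2', h3'⟩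
            · subst hap'; subst hbl'
              rw [hP2A] at hx'
              have h4 : g = w ∨ g = u ∨ g = v ∨ g = ℓ := by simpa using hx'
              rcases h4 with h | h | h | h
              exacts [nwg h.symm, hug h.symm, ngv h, ngl h]
            · exact hne (by rw [hap', hbl'])
            · subst hbp'
              rw [hP2q a' ha'b'] at hx'
              exact (hLug a' ha'b').2 hx'
            · rw [hP2o a' b' ha'b' h1' h2' h3'] at hx'
              exact (hFree a' b' ha'b' h1' h2' h3').2.2 hx'
          · exfalso
            rcases hcases a' b' ha'b' with ⟨hap', hbl'⟩ | ⟨hap', hbl'⟩ | hbp' | ⟨h1', h2', h3'⟩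
            · subst hap'; subst hbl'
              rw [hP2A] at hx'
              have h4 : e = w ∨ e = u ∨ e = v ∨ e = ℓ := by simpa using hx'
              rcases h4 with h | h | h | h
              exacts [nwe h.symm, nue h.symm, hve h.symm, nel h]
            · exact hne (by rw [hap', hbl'])
            · subst hbp'
              rw [hP2q a' ha'b'] at hx'
              exact hnpℓ' (hMemE a' p ha'b' (hLsub a' ha'b' e hx'))
            · rw [hP2o a' b' ha'b' h1' h2' h3'] at hx'
              have hbl' : b' = ℓ' := hMemE a' b' ha'b' hx'
              exact h2' ⟨hTparent (hbl' ▸ ha'b') hpℓ', hbl'⟩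
          · right
            rw [hφ2ne ℓ' (Ne.symm hnpℓ'), hφl']
        · subst hbp
          rw [hP2q a hab] at hx
          have hxm : x ∈ P a p := hLsub a hab x hx
          rcases hcases a' b' ha'b' with ⟨hap', hbl'⟩ | ⟨hap', hbl'⟩ | hbp' | ⟨h1', h2', h3'⟩
          · subst hap'; subst hbl'
            rw [hP2A] at hx'
            have hx4 : w = x ∨ u = x ∨ v = x ∨ ℓ = x := or4_flip (by simpa using hx')
            rcases hx4 with rfl | rfl | rfl | rfl
            · exact Or.inr hφ2p.symm
            · exact absurd hx (hLug a hab).1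
            · exact absurd (hMemV a p hab hxm) hnpℓ
            · exact absurd (hMemLm a p hab hxm) hnpℓ
          · subst hap'; subst hbl'
            rw [hP2B] at hx'
            have hx4 : w = x ∨ g = x ∨ e = x ∨ ℓ' = x := or4_flip (by simpa using hx')
            rcases hx4 with rfl | rfl | rfl | rfl
            · exact Or.inr hφ2p.symm
            · exact absurd hx (hLug a hab).2
            · exact absurd (hMemE a p hab hxm) hnpℓ'
            · exact absurd (hMemL'm a p hab hxm) hnpℓ'
          · subst hbp'
            exact absurd (hTparent hab ha'b') (fun h => hne (by rw [h]))
          · rw [hP2o a' b' ha'b' h1' h2' h3'] at hx'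
            have hd := hdisj a p a' b' hab ha'b'
              (fun h => h3' (congrArg Prod.snd h).symm) x hxm hx'
            rcases hd.1 with h | h
            · left; rw [hφ2ne a (neadjT hab)]; exact h
            · right; rw [hφ2p]; exact hLphi a hab x hx h
        · rw [hP2o a b hab h1 h2 h3] at hx
          rcases hcases a' b' ha'b' with ⟨hap', hbl'⟩ | ⟨hap', hbl'⟩ | hbp' | ⟨h1', h2', h3'⟩
          · subst hap'; subst hbl'
            rw [hP2A] at hx'
            have hx4 : w = x ∨ u = x ∨ v = x ∨ ℓ = x := or4_flip (by simpa using hx')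
            exfalso
            rcases hx4 with rfl | rfl | rfl | rfl
            · exact (hFree a b hab h1 h2 h3).1 hx
            · exact (hFree a b hab h1 h2 h3).2.1 hx
            · have hbl : b = ℓ := hMemV a b hab hx
              exact h1 ⟨hTparent (hbl ▸ hab) hpℓ, hbl⟩
            · have hbl : b = ℓ := hMemLm a b hab hx
              exact h1 ⟨hTparent (hbl ▸ hab) hpℓ, hbl⟩
          · subst hap'; subst hbl'
            rw [hP2B] at hx'
            have hx4 : w = x ∨ g = x ∨ e = x ∨ ℓ' = x := or4_flip (by simpa using hx')
            exfalso
            rcases hx4 with rfl | rfl | rfl | rfl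
            · exact (hFree a b hab h1 h2 h3).1 hx
            · exact (hFree a b hab h1 h2 h3).2.2 hx
            · have hbl : b = ℓ' := hMemE a b hab hx
              exact h2 ⟨hTparent (hbl ▸ hab) hpℓ', hbl⟩
            · have hbl : b = ℓ' := hMemL'm a b hab hx
              exact h2 ⟨hTparent (hbl ▸ hab) hpℓ', hbl⟩
          · subst hbp'
            rw [hP2q a' ha'b'] at hx'
            have hd := hdisj a b a' p hab ha'b'
              (fun h => h3 (congrArg Prod.snd h)) x hx (hLsub a' ha'b' x hx')
            rcases hd.1 with h | h
            · left; rw [hφ2ne a (hanep a b hab h1 h2)]; exact h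
            · right; rw [hφ2ne b h3]; exact h
          · rw [hP2o a' b' ha'b' h1' h2' h3'] at hx'
            have hd := hdisj a b a' b' hab ha'b' hne x hx hx'
            rcases hd.1 with h | h
            · left; rw [hφ2ne a (hanep a b hab h1 h2)]; exact h
            · right; rw [hφ2ne b h3]; exact h
      intro a b a' b' hab ha'b' hne x hx hx'
      exact ⟨key a b a' b' hab ha'b' hne x hx hx',
        key a' b' a b ha'b' hab (fun h => hne h.symm) x hx' hx⟩
  -- the case-S construction (shared by the two symmetric middle cases)
  have caseS : ∀ s : V, adjN w s → adjN s v → adjN s e → (∀ c, adjN c s → c = w) →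
      pl' = pl → φ pl = s → P pl ℓ = [s, v, ℓ] → P pl ℓ' = [s, e, ℓ'] →
      Displays vertsN (fun x y => adjN x y ∧ ¬ (x = u ∧ y = e) ∧ ¬ (x = g ∧ y = v))
        vertsT adjT := by
    intro s hws hsv hse hinS hplpl hφpl hApl hBpl
    have hplℓ' : adjT pl ℓ' := by rw [← hplpl]; exact hpl'
    have hnplℓ : pl ≠ ℓ := neadjT hpl
    have hnplℓ' : pl ≠ ℓ' := neadjT hplℓ'
    have nsw : s ≠ w := Ne.symm (neadjN hws)
    have hImS : ∀ c, c ∈ vertsT → adjN w (φ c) → c = pl := by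
      intro c hc hwc
      by_cases hcl : IsLeaf vertsT adjT c
      · exfalso
        have h0 := hImDegLeaf c hc hcl
        have h2 := (houtWC _ hwc).2
        omega
      · obtain ⟨c1, c2, h12, hc1, hc2⟩ := hTchild c hc hcl
        have h2 := hPlen2 c c1 hc1
        obtain ⟨z, hz⟩ : ∃ z, (P c c1)[1]? = some z := ⟨_, List.getElem?_eq_getElem (by omega)⟩
        have hadj : adjN (φ c) z := chain_step (hPchain c c1 hc1) (hPfst c c1 hc1) hz
        rcases or2_flip ((houtWC _ hwc).1 z hadj) with rfl | rfl
        · have hq := hMemV c c1 hc1 (mem_iff_idx.2 ⟨1, hz⟩)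
          exact hTparent (hq ▸ hc1) hpl
        · have hq := hMemE c c1 hc1 (mem_iff_idx.2 ⟨1, hz⟩)
          exact hTparent (hq ▸ hc1) hplℓ'
    have hImU' : ∀ c, c ∈ vertsT → φ c = u → c = pl := by
      intro c hc hq; exact hImS c hc (by rw [hq]; exact hwu)
    have hImG' : ∀ c, c ∈ vertsT → φ c = g → c = pl := by
      intro c hc hq; exact hImS c hc (by rw [hq]; exact hwg)
    have hUGpos : ∀ a b, adjT a b → ¬ (a = pl ∧ b = ℓ) → ¬ (a = pl ∧ b = ℓ') →
        ∀ i z, (P a b)[i]? = some z → adjN w z → i = (P a b).length - 1 ∧ b = pl := by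
      intro a b hab h1 h2 i z hi hwz
      have hilt := idx_lt_length hi
      by_cases hlast : i = (P a b).length - 1
      · subst hlast
        rw [hPlst a b hab] at hi
        have hφbz : φ b = z := Option.some.inj hi
        exact ⟨rfl, hImS b (hT.adj_mem hab).2 (by rw [hφbz]; exact hwz)⟩
      · exfalso
        obtain ⟨z2, hz2⟩ : ∃ z2, (P a b)[i+1]? = some z2 :=
          ⟨_, List.getElem?_eq_getElem (by omega)⟩
        have hadj := chain_step (hPchain a b hab) hi hz2
        rcases or2_flip ((houtWC z hwz).1 z2 hadj) with rfl | rfl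
        · have hbℓ : b = ℓ := hMemV a b hab (mem_iff_idx.2 ⟨i+1, hz2⟩)
          exact h1 ⟨hTparent (hbℓ ▸ hab) hpl, hbℓ⟩
        · have hbℓ : b = ℓ' := hMemE a b hab (mem_iff_idx.2 ⟨i+1, hz2⟩)
          exact h2 ⟨hTparent (hbℓ ▸ hab) hplℓ', hbℓ⟩
    have hImW : ∀ c, c ∈ vertsT → φ c ≠ w := by
      intro c hc hcw
      by_cases hcl : IsLeaf vertsT adjT c
      · have h0 := hImDegLeaf c hc hcl
        rw [hcw] at h0
        have := hw.2; omega
      · obtain ⟨c1, c2, h12, hc1, hc2⟩ := hTchild c hc hcl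
        have key : ∀ d, adjT c d → d = pl := by
          intro d hd
          have h2 := hPlen2 c d hd
          obtain ⟨z, hz⟩ : ∃ z, (P c d)[1]? = some z :=
            ⟨_, List.getElem?_eq_getElem (by omega)⟩
          have hadj : adjN w z := by
            have h3 := chain_step (hPchain c d hd) (hPfst c d hd) hz
            rw [hcw] at h3; exact h3
          have hcpl : c ≠ pl := by
            intro hq
            apply nsw
            rw [← hφpl, ← hq, hcw]
          exact (hUGpos c d hd (fun h => hcpl h.1) (fun h => hcpl h.1) 1 z hz hadj).2
        exact h12 ((key c1 hc1).trans (key c2 hc2).symm)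
    have hWpos : ∀ a b, adjT a b → ¬ (a = pl ∧ b = ℓ) → ¬ (a = pl ∧ b = ℓ') →
        ∀ i, (P a b)[i]? = some w → b = pl ∧ i = (P a b).length - 2 := by
      intro a b hab h1 h2 i hi
      have hilt := idx_lt_length hi
      by_cases hlast : i = (P a b).length - 1
      · exfalso
        subst hlast
        rw [hPlst a b hab] at hi
        exact hImW b (hT.adj_mem hab).2 (Option.some.inj hi)
      · obtain ⟨z, hz⟩ : ∃ z, (P a b)[i+1]? = some z :=
          ⟨_, List.getElem?_eq_getElem (by omega)⟩
        have hadj : adjN w z := chain_step (hPchain a b hab) hi hz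
        have h3 := hUGpos a b hab h1 h2 (i+1) z hz hadj
        have h4 := h3.1
        exact ⟨h3.2, by omega⟩
    have hFreeS : ∀ a b, adjT a b → ¬ (a = pl ∧ b = ℓ) → ¬ (a = pl ∧ b = ℓ') → b ≠ pl →
        w ∉ P a b ∧ u ∉ P a b ∧ g ∉ P a b := by
      intro a b hab h1 h2 h3
      refine ⟨fun hm => ?_, fun hm => ?_, fun hm => ?_⟩
      · obtain ⟨i, hi⟩ := mem_iff_idx.1 hm
        exact h3 (hWpos a b hab h1 h2 i hi).1
      · obtain ⟨i, hi⟩ := mem_iff_idx.1 hm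
        exact h3 (hUGpos a b hab h1 h2 i u hi hwu).2
      · obtain ⟨i, hi⟩ := mem_iff_idx.1 hm
        exact h3 (hUGpos a b hab h1 h2 i g hi hwg).2
    have hqcond1 : ∀ a, adjT a pl → ¬ (a = pl ∧ pl = ℓ) := fun a ha h => hnplℓ h.2
    have hqcond2 : ∀ a, adjT a pl → ¬ (a = pl ∧ pl = ℓ') := fun a ha h => hnplℓ' h.2
    have hqlast : ∀ a, adjT a pl → (P a pl)[(P a pl).length - 1]? = some s := by
      intro a ha; rw [hPlst a pl ha, hφpl]
    have hqpen : ∀ a, adjT a pl → (P a pl)[(P a pl).length - 2]? = some w := by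
      intro a ha
      have hlen := hPlen2 a pl ha
      obtain ⟨z, hz⟩ : ∃ z, (P a pl)[(P a pl).length - 2]? = some z :=
        ⟨_, List.getElem?_eq_getElem (by omega)⟩
      have hadj : adjN z s := chain_step (hPchain a pl ha) hz
        (by rw [show (P a pl).length - 2 + 1 = (P a pl).length - 1 from by omega]
            exact hqlast a ha)
      rw [hinS z hadj] at hz
      exact hz
    apply main_common pl hpl hplℓ' (fun a => (P a pl).dropLast)
    · intro a ha
      have hlen := hPlen2 a pl ha
      have hlend : (P a pl).dropLast.length = (P a pl).length - 1 := List.length_dropLast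
      refine path_mk ?_ ?_ ?_ ?_
      · rw [hlend]; omega
      · apply chain_of_steps
        intro i x y hx hy
        have hylt := idx_lt_length hy
        rw [hlend] at hylt
        have hx' : (P a pl)[i]? = some x := by rw [← dropLast_idx (by omega)]; exact hx
        have hy' : (P a pl)[i+1]? = some y := by rw [← dropLast_idx (by omega)]; exact hy
        refine ⟨chain_step (hPchain a pl ha) hx' hy', ?_, ?_⟩
        · rintro ⟨hxu, hye⟩
          rw [hxu] at hx'
          have h9 := (hUGpos a pl ha (hqcond1 a ha) (hqcond2 a ha) i u hx' hwu).1
          omega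
        · rintro ⟨hxg, hyv⟩
          rw [hxg] at hx'
          have h9 := (hUGpos a pl ha (hqcond1 a ha) (hqcond2 a ha) i g hx' hwg).1
          omega
      · rw [dropLast_idx (by omega)]
        exact hPfst a pl ha
      · rw [hlend, dropLast_idx (by omega)]
        rw [show (P a pl).length - 1 - 1 = (P a pl).length - 2 from by omega]
        exact hqpen a ha
    · intro a ha x hx
      exact List.Sublist.mem hx (List.dropLast_sublist _)
    · intro a ha x hx hxs
      exfalso
      have hlen := hPlen2 a pl ha
      obtain ⟨i, hi⟩ := mem_iff_idx.1 hx
      have hilt := idx_lt_length hi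
      rw [List.length_dropLast] at hilt
      have hi' : (P a pl)[i]? = some x := by rw [← dropLast_idx (by omega)]; exact hi
      rw [hxs, hφpl] at hi'
      have h9 := nodup_idx (hPnodup a pl ha) hi' (hqlast a ha)
      omega
    · intro a ha i hi
      have hlen := hPlen2 a pl ha
      have hilt := idx_lt_length hi
      rw [List.length_dropLast] at hilt
      have hi' : (P a pl)[i]? = some w := by rw [← dropLast_idx (by omega)]; exact hi
      have h3 := (hWpos a pl ha (hqcond1 a ha) (hqcond2 a ha) i hi').2
      rw [List.length_dropLast]
      omega
    · intro a ha
      have hlen := hPlen2 a pl ha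
      constructor
      · intro hm
        obtain ⟨i, hi⟩ := mem_iff_idx.1 hm
        have hilt := idx_lt_length hi
        rw [List.length_dropLast] at hilt
        have hi' : (P a pl)[i]? = some u := by rw [← dropLast_idx (by omega)]; exact hi
        have h9 := (hUGpos a pl ha (hqcond1 a ha) (hqcond2 a ha) i u hi' hwu).1
        omega
      · intro hm
        obtain ⟨i, hi⟩ := mem_iff_idx.1 hm
        have hilt := idx_lt_length hi
        rw [List.length_dropLast] at hilt
        have hi' : (P a pl)[i]? = some g := by rw [← dropLast_idx (by omega)]; exact hi
        have h9 := (hUGpos a pl ha (hqcond1 a ha) (hqcond2 a ha) i g hi' hwg).1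
        omega
    · intro a ha x hx
      obtain ⟨i, hi0, hi1, hidx⟩ := interior_idx_rev hx
      rw [List.length_dropLast] at hi1
      have hi' : (P a pl)[i]? = some x := by rw [← dropLast_idx (by omega)]; exact hidx
      exact hPint a pl ha hi' hi0 (by omega)
    · intro c hc hcw
      exact absurd hcw (hImW c hc)
    · exact hImU'
    · exact hImG'
    · exact hFreeS
  have hnepair : (pl, ℓ) ≠ (pl', ℓ') := fun hq => nll' (congrArg Prod.snd hq)
  rcases or2_flip hxAug with rfl | rfl <;> rcases or2_flip hxBug with rfl | rfl
  -- case (u, u) : case S with s = u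
  · have huA : u ∈ P pl ℓ := mem_iff_idx.2 ⟨_, hxA⟩
    have huB : u ∈ P pl' ℓ' := mem_iff_idx.2 ⟨_, hxB⟩
    have hd := hdisj pl ℓ pl' ℓ' hpl hpl' hnepair u huA huB
    have hφplu : φ pl = u := by
      rcases hd.1 with h | h
      · exact h.symm
      · rw [hφl] at h; exact absurd h nul
    have hφpl'u : φ pl' = u := by
      rcases hd.2 with h | h
      · exact h.symm
      · rw [hφl'] at h; exact absurd h nul'
    have hplpl : pl' = pl := hinj hpl'T hplT (by rw [hφplu, hφpl'u])
    have hlA : (P pl ℓ).length = 3 := by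
      have h0 := hPfst pl ℓ hpl
      rw [hφplu] at h0
      have h9 := nodup_idx (hPnodup pl ℓ hpl) hxA h0
      omega
    have hlB : (P pl' ℓ').length = 3 := by
      have h0 := hPfst pl' ℓ' hpl'
      rw [hφpl'u] at h0
      have h9 := nodup_idx (hPnodup pl' ℓ' hpl') hxB h0
      omega
    have hApl : P pl ℓ = [u, v, ℓ] := path_eq_three hlA hxA hv2 hAlast
    have hBpl : P pl' ℓ' = [u, e, ℓ'] := path_eq_three hlB hxB he2 hBlast
    exact caseS u hwu huv hue hinU hplpl hφplu hApl (by rw [← hplpl]; exact hBpl)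
  -- case (u, g) : nothing to reroute
  · refine ⟨φ, P, hmap, hinj, hlf, ?_, hint, hdisj⟩
    intro a b hab
    obtain ⟨hc, hh, hlst⟩ := hpath a b hab
    refine ⟨chain_of_steps ?_, hh, hlst⟩
    intro i x y hx hy
    refine ⟨chain_step hc hx hy, ?_, ?_⟩
    · rintro ⟨hxu, hye⟩
      rw [hye] at hy
      have hbe : b = ℓ' := hMemE a b hab (mem_iff_idx.2 ⟨i+1, hy⟩)
      have hapl : a = pl' := hTparent (hbe ▸ hab) hpl'
      rw [hapl, hbe] at hx hy
      have hieq : i + 1 = (P pl' ℓ').length - 2 :=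
        nodup_idx (hPnodup pl' ℓ' hpl') hy he2
      have hieq2 : i = (P pl' ℓ').length - 3 := by omega
      rw [hieq2, hxu] at hx
      exact hug (Option.some.inj (hx.symm.trans hxB))
    · rintro ⟨hxg, hyv⟩
      rw [hyv] at hy
      have hbv : b = ℓ := hMemV a b hab (mem_iff_idx.2 ⟨i+1, hy⟩)
      have hapl : a = pl := hTparent (hbv ▸ hab) hpl
      rw [hapl, hbv] at hx hy
      have hieq : i + 1 = (P pl ℓ).length - 2 :=
        nodup_idx (hPnodup pl ℓ hpl) hy hv2
      have hieq2 : i = (P pl ℓ).length - 3 := by omega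
      rw [hieq2, hxg] at hx
      exact hug (Option.some.inj (hx.symm.trans hxA)).symm
  -- case (g, u) : case IV
  · have hlA3ne : ¬ (P pl ℓ).length = 3 := by
      intro h3
      have hφplg : φ pl = g := by
        have h0 := hPfst pl ℓ hpl
        rw [show (0:ℕ) = (P pl ℓ).length - 3 from by omega] at h0
        exact Option.some.inj (h0.symm.trans hxA)
      have hplnl : ¬ IsLeaf vertsT adjT pl := fun h0 => hnooutT pl h0.2 ℓ hpl
      obtain ⟨c1, c2, h12, hc1, hc2⟩ := hTchild pl hplT hplnl
      have hklem : ∀ c, adjT pl c → c ≠ ℓ → False := by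
        intro c hc hcl
        have h2 := hPlen2 pl c hc
        obtain ⟨z, hz⟩ : ∃ z, (P pl c)[1]? = some z := ⟨_, List.getElem?_eq_getElem (by omega)⟩
        have hadj : adjN g z := by
          have h4 := chain_step (hPchain pl c hc) (hPfst pl c hc) hz
          rw [hφplg] at h4; exact h4
        rcases or2_flip (houtG z hadj) with rfl | rfl
        · exact hcl (hMemV pl c hc (mem_iff_idx.2 ⟨1, hz⟩))
        · have hcl' : c = ℓ' := hMemE pl c hc (mem_iff_idx.2 ⟨1, hz⟩)
          have hpp : pl = pl' := hTparent (hcl' ▸ hc) hpl'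
          have hfstB : (P pl' ℓ')[0]? = some g := by
            rw [hPfst pl' ℓ' hpl', ← hpp, hφplg]
          have hne0 : (P pl' ℓ').length - 3 ≠ 0 := by
            intro h0
            rw [h0] at hxB
            exact hug (Option.some.inj (hfstB.symm.trans hxB)).symm
          obtain ⟨z2, hz2⟩ : ∃ z2, (P pl' ℓ')[(P pl' ℓ').length - 4]? = some z2 :=
            ⟨_, List.getElem?_eq_getElem (by omega)⟩
          have hz2w : z2 = w := hinU z2 (chain_step (hPchain pl' ℓ' hpl') hz2
            (by rw [show (P pl' ℓ').length - 4 + 1 = (P pl' ℓ').length - 3 from by omega]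
                exact hxB))
          rw [hz2w] at hz2
          by_cases h40 : (P pl' ℓ').length - 4 = 0
          · rw [h40] at hz2
            exact nwg (Option.some.inj (hz2.symm.trans hfstB))
          · exact hN.acyclic g
              ((chain_transGen (hPchain pl' ℓ' hpl') hfstB hz2 (by omega)).tail hwg)
      by_cases hc1ℓ : c1 = ℓ
      · exact hklem c2 hc2 (fun hq => h12 (hc1ℓ.trans hq.symm))
      · exact hklem c1 hc1 hc1ℓ
    have hlB3ne : ¬ (P pl' ℓ').length = 3 := by
      intro h3
      have hφpl'u : φ pl' = u := by
        have h0 := hPfst pl' ℓ' hpl'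
        rw [show (0:ℕ) = (P pl' ℓ').length - 3 from by omega] at h0
        exact Option.some.inj (h0.symm.trans hxB)
      have hplnl' : ¬ IsLeaf vertsT adjT pl' := fun h0 => hnooutT pl' h0.2 ℓ' hpl'
      obtain ⟨c1, c2, h12, hc1, hc2⟩ := hTchild pl' hpl'T hplnl'
      have hklem : ∀ c, adjT pl' c → c ≠ ℓ' → False := by
        intro c hc hcl
        have h2 := hPlen2 pl' c hc
        obtain ⟨z, hz⟩ : ∃ z, (P pl' c)[1]? = some z := ⟨_, List.getElem?_eq_getElem (by omega)⟩
        have hadj : adjN u z := by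
          have h4 := chain_step (hPchain pl' c hc) (hPfst pl' c hc) hz
          rw [hφpl'u] at h4; exact h4
        rcases or2_flip (houtU z hadj) with rfl | rfl
        · have hcℓ : c = ℓ := hMemV pl' c hc (mem_iff_idx.2 ⟨1, hz⟩)
          have hpp : pl' = pl := hTparent (hcℓ ▸ hc) hpl
          have hfstA : (P pl ℓ)[0]? = some u := by
            rw [hPfst pl ℓ hpl, ← hpp, hφpl'u]
          have hne0 : (P pl ℓ).length - 3 ≠ 0 := by
            intro h0
            rw [h0] at hxA
            exact hug (Option.some.inj (hfstA.symm.trans hxA))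
          obtain ⟨z2, hz2⟩ : ∃ z2, (P pl ℓ)[(P pl ℓ).length - 4]? = some z2 :=
            ⟨_, List.getElem?_eq_getElem (by omega)⟩
          have hz2w : z2 = w := hinG z2 (chain_step (hPchain pl ℓ hpl) hz2
            (by rw [show (P pl ℓ).length - 4 + 1 = (P pl ℓ).length - 3 from by omega]
                exact hxA))
          rw [hz2w] at hz2
          by_cases h40 : (P pl ℓ).length - 4 = 0
          · rw [h40] at hz2
            exact nwu (Option.some.inj (hz2.symm.trans hfstA))
          · exact hN.acyclic u
              ((chain_transGen (hPchain pl ℓ hpl) hfstA hz2 (by omega)).tail hwu)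
        · exact hcl (hMemE pl' c hc (mem_iff_idx.2 ⟨1, hz⟩))
      by_cases hc1ℓ : c1 = ℓ'
      · exact hklem c2 hc2 (fun hq => h12 (hc1ℓ.trans hq.symm))
      · exact hklem c1 hc1 hc1ℓ
    have hA4 : 4 ≤ (P pl ℓ).length := by omega
    have hB4 : 4 ≤ (P pl' ℓ').length := by omega
    obtain ⟨zA, hzA⟩ : ∃ z, (P pl ℓ)[(P pl ℓ).length - 4]? = some z :=
      ⟨_, List.getElem?_eq_getElem (by omega)⟩
    have hzAw : zA = w := hinG zA (chain_step (hPchain pl ℓ hpl) hzA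
      (by rw [show (P pl ℓ).length - 4 + 1 = (P pl ℓ).length - 3 from by omega]; exact hxA))
    rw [hzAw] at hzA
    obtain ⟨zB, hzB⟩ : ∃ z, (P pl' ℓ')[(P pl' ℓ').length - 4]? = some z :=
      ⟨_, List.getElem?_eq_getElem (by omega)⟩
    have hzBw : zB = w := hinU zB (chain_step (hPchain pl' ℓ' hpl') hzB
      (by rw [show (P pl' ℓ').length - 4 + 1 = (P pl' ℓ').length - 3 from by omega]; exact hxB))
    rw [hzBw] at hzB
    have hwA : w ∈ P pl ℓ := mem_iff_idx.2 ⟨_, hzA⟩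
    have hwB : w ∈ P pl' ℓ' := mem_iff_idx.2 ⟨_, hzB⟩
    have hd := hdisj pl ℓ pl' ℓ' hpl hpl' hnepair w hwA hwB
    have hφplw : φ pl = w := by
      rcases hd.1 with h | h
      · exact h.symm
      · rw [hφl] at h; exact absurd h nwl
    have hφpl'w : φ pl' = w := by
      rcases hd.2 with h | h
      · exact h.symm
      · rw [hφl'] at h; exact absurd h nwl'
    have hplpl : pl' = pl := hinj hpl'T hplT (by rw [hφplw, hφpl'w])
    have hlA : (P pl ℓ).length = 4 := by
      have h0 := hPfst pl ℓ hpl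
      rw [hφplw] at h0
      have h9 := nodup_idx (hPnodup pl ℓ hpl) hzA h0
      omega
    have hlB : (P pl' ℓ').length = 4 := by
      have h0 := hPfst pl' ℓ' hpl'
      rw [hφpl'w] at h0
      have h9 := nodup_idx (hPnodup pl' ℓ' hpl') hzB h0
      omega
    have hApl : P pl ℓ = [w, g, v, ℓ] := path_eq_four hlA hzA hxA hv2 hAlast
    have hBpl : P pl' ℓ' = [w, u, e, ℓ'] := path_eq_four hlB hzB hxB he2 hBlast
    rw [hplpl] at hBpl
    have hplℓ' : adjT pl ℓ' := by rw [← hplpl]; exact hpl'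
    have hnplℓ : pl ≠ ℓ := neadjT hpl
    have hnplℓ' : pl ≠ ℓ' := neadjT hplℓ'
    have hImU4 : ∀ c, c ∈ vertsT → φ c ≠ u := by
      intro c hc hcu
      by_cases hcl : IsLeaf vertsT adjT c
      · have h0 := hImDegLeaf c hc hcl
        rw [hcu] at h0
        have := hu.2; omega
      · obtain ⟨c1, c2, h12, hc1, hc2⟩ := hTchild c hc hcl
        have h2 := hPlen2 c c1 hc1
        obtain ⟨z, hz⟩ : ∃ z, (P c c1)[1]? = some z := ⟨_, List.getElem?_eq_getElem (by omega)⟩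
        have hadj : adjN u z := by
          have h4 := chain_step (hPchain c c1 hc1) (hPfst c c1 hc1) hz
          rw [hcu] at h4; exact h4
        rcases or2_flip (houtU z hadj) with rfl | rfl
        · have hc1ℓ : c1 = ℓ := hMemV c c1 hc1 (mem_iff_idx.2 ⟨1, hz⟩)
          have hq : c = pl := hTparent (hc1ℓ ▸ hc1) hpl
          rw [hq, hφplw] at hcu
          exact nwu hcu
        · have hc1ℓ : c1 = ℓ' := hMemE c c1 hc1 (mem_iff_idx.2 ⟨1, hz⟩)
          have hq : c = pl := hTparent (hc1ℓ ▸ hc1) hplℓ'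
          rw [hq, hφplw] at hcu
          exact nwu hcu
    have hImG4 : ∀ c, c ∈ vertsT → φ c ≠ g := by
      intro c hc hcg
      by_cases hcl : IsLeaf vertsT adjT c
      · have h0 := hImDegLeaf c hc hcl
        rw [hcg] at h0
        have := hg.2; omega
      · obtain ⟨c1, c2, h12, hc1, hc2⟩ := hTchild c hc hcl
        have h2 := hPlen2 c c1 hc1
        obtain ⟨z, hz⟩ : ∃ z, (P c c1)[1]? = some z := ⟨_, List.getElem?_eq_getElem (by omega)⟩
        have hadj : adjN g z := by
          have h4 := chain_step (hPchain c c1 hc1) (hPfst c c1 hc1) hz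
          rw [hcg] at h4; exact h4
        rcases or2_flip (houtG z hadj) with rfl | rfl
        · have hc1ℓ : c1 = ℓ := hMemV c c1 hc1 (mem_iff_idx.2 ⟨1, hz⟩)
          have hq : c = pl := hTparent (hc1ℓ ▸ hc1) hpl
          rw [hq, hφplw] at hcg
          exact nwg hcg
        · have hc1ℓ : c1 = ℓ' := hMemE c c1 hc1 (mem_iff_idx.2 ⟨1, hz⟩)
          have hq : c = pl := hTparent (hc1ℓ ▸ hc1) hplℓ'
          rw [hq, hφplw] at hcg
          exact nwg hcg
    have hUfree4 : ∀ a b, adjT a b → ¬ (a = pl ∧ b = ℓ') → u ∉ P a b := by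
      intro a b hab h2 hm
      obtain ⟨i, hi⟩ := mem_iff_idx.1 hm
      have hilt := idx_lt_length hi
      by_cases hlast : i = (P a b).length - 1
      · subst hlast
        rw [hPlst a b hab] at hi
        exact hImU4 b (hT.adj_mem hab).2 (Option.some.inj hi)
      · obtain ⟨z, hz⟩ : ∃ z, (P a b)[i+1]? = some z :=
          ⟨_, List.getElem?_eq_getElem (by omega)⟩
        have hadj : adjN u z := chain_step (hPchain a b hab) hi hz
        rcases or2_flip (houtU z hadj) with rfl | rfl
        · have hbℓ : b = ℓ := hMemV a b hab (mem_iff_idx.2 ⟨i+1, hz⟩)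
          have hapl : a = pl := hTparent (hbℓ ▸ hab) hpl
          rw [hapl, hbℓ, hApl] at hi
          have hmem : u ∈ [w, g, v, ℓ] := mem_iff_idx.2 ⟨i, hi⟩
          have hq : u = w ∨ u = g ∨ u = v ∨ u = ℓ := by simpa using hmem
          rcases hq with h | h | h | h
          exacts [nwu h.symm, hug h, nuv h, nul h]
        · have hbℓ' : b = ℓ' := hMemE a b hab (mem_iff_idx.2 ⟨i+1, hz⟩)
          exact h2 ⟨hTparent (hbℓ' ▸ hab) hplℓ', hbℓ'⟩
    have hGfree4 : ∀ a b, adjT a b → ¬ (a = pl ∧ b = ℓ) → g ∉ P a b := by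
      intro a b hab h1 hm
      obtain ⟨i, hi⟩ := mem_iff_idx.1 hm
      have hilt := idx_lt_length hi
      by_cases hlast : i = (P a b).length - 1
      · subst hlast
        rw [hPlst a b hab] at hi
        exact hImG4 b (hT.adj_mem hab).2 (Option.some.inj hi)
      · obtain ⟨z, hz⟩ : ∃ z, (P a b)[i+1]? = some z :=
          ⟨_, List.getElem?_eq_getElem (by omega)⟩
        have hadj : adjN g z := chain_step (hPchain a b hab) hi hz
        rcases or2_flip (houtG z hadj) with rfl | rfl
        · have hbℓ : b = ℓ := hMemV a b hab (mem_iff_idx.2 ⟨i+1, hz⟩)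
          exact h1 ⟨hTparent (hbℓ ▸ hab) hpl, hbℓ⟩
        · have hbℓ' : b = ℓ' := hMemE a b hab (mem_iff_idx.2 ⟨i+1, hz⟩)
          have hapl : a = pl := hTparent (hbℓ' ▸ hab) hplℓ'
          rw [hapl, hbℓ', hBpl] at hi
          have hmem : g ∈ [w, u, e, ℓ'] := mem_iff_idx.2 ⟨i, hi⟩
          have hq : g = w ∨ g = u ∨ g = e ∨ g = ℓ' := by simpa using hmem
          rcases hq with h | h | h | h
          exacts [nwg h.symm, hug h.symm, nge h, ngl' h]
    have hWpos4 : ∀ a b, adjT a b → ¬ (a = pl ∧ b = ℓ) → ¬ (a = pl ∧ b = ℓ') →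
        ∀ i, (P a b)[i]? = some w → i = (P a b).length - 1 ∧ b = pl := by
      intro a b hab h1 h2 i hi
      have hilt := idx_lt_length hi
      by_cases hlast : i = (P a b).length - 1
      · subst hlast
        rw [hPlst a b hab] at hi
        have hq : φ b = w := Option.some.inj hi
        exact ⟨rfl, hinj (hT.adj_mem hab).2 hplT (by rw [hq, hφplw])⟩
      · exfalso
        obtain ⟨z, hz⟩ : ∃ z, (P a b)[i+1]? = some z :=
          ⟨_, List.getElem?_eq_getElem (by omega)⟩
        have hadj : adjN w z := chain_step (hPchain a b hab) hi hz
        rcases or2_flip (houtW z hadj) with rfl | rfl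
        · exact hUfree4 a b hab h2 (mem_iff_idx.2 ⟨i+1, hz⟩)
        · exact hGfree4 a b hab h1 (mem_iff_idx.2 ⟨i+1, hz⟩)
    apply main_common pl hpl hplℓ' (fun a => P a pl)
    · intro a ha
      obtain ⟨hc, hh, hlst⟩ := hpath a pl ha
      refine ⟨chain_of_steps ?_, hh, by rw [← hφplw]; exact hlst⟩
      intro i x y hx hy
      refine ⟨chain_step hc hx hy, ?_, ?_⟩
      · rintro ⟨hxu, hye⟩
        rw [hxu] at hx
        exact hUfree4 a pl ha (fun h => hnplℓ' h.2) (mem_iff_idx.2 ⟨i, hx⟩)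
      · rintro ⟨hxg, hyv⟩
        rw [hxg] at hx
        exact hGfree4 a pl ha (fun h => hnplℓ h.2) (mem_iff_idx.2 ⟨i, hx⟩)
    · intro a ha x hx
      exact hx
    · intro a ha x hx hxw
      rw [hφplw] at hxw; exact hxw
    · intro a ha i hi
      exact (hWpos4 a pl ha (fun h => hnplℓ h.2) (fun h => hnplℓ' h.2) i hi).1
    · intro a ha
      exact ⟨hUfree4 a pl ha (fun h => hnplℓ' h.2), hGfree4 a pl ha (fun h => hnplℓ h.2)⟩
    · intro a ha x hx
      exact hint a pl ha x hx
    · intro c hc hcw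
      exact hinj hc hplT (by rw [hcw, hφplw])
    · intro c hc hcu
      exact absurd hcu (hImU4 c hc)
    · intro c hc hcg
      exact absurd hcg (hImG4 c hc)
    · intro a b hab h1 h2 h3
      refine ⟨fun hm => ?_, hUfree4 a b hab h2, hGfree4 a b hab h1⟩
      obtain ⟨i, hi⟩ := mem_iff_idx.1 hm
      exact h3 (hWpos4 a b hab h1 h2 i hi).2
  -- case (g, g) : case S with s = g
  · have hgA : g ∈ P pl ℓ := mem_iff_idx.2 ⟨_, hxA⟩
    have hgB : g ∈ P pl' ℓ' := mem_iff_idx.2 ⟨_, hxB⟩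
    have hd := hdisj pl ℓ pl' ℓ' hpl hpl' hnepair g hgA hgB
    have hφplg : φ pl = g := by
      rcases hd.1 with h | h
      · exact h.symm
      · rw [hφl] at h; exact absurd h ngl
    have hφpl'g : φ pl' = g := by
      rcases hd.2 with h | h
      · exact h.symm
      · rw [hφl'] at h; exact absurd h ngl'
    have hplpl : pl' = pl := hinj hpl'T hplT (by rw [hφplg, hφpl'g])
    have hlA : (P pl ℓ).length = 3 := by
      have h0 := hPfst pl ℓ hpl
      rw [hφplg] at h0
      have h9 := nodup_idx (hPnodup pl ℓ hpl) hxA h0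
      omega
    have hlB : (P pl' ℓ').length = 3 := by
      have h0 := hPfst pl' ℓ' hpl'
      rw [hφpl'g] at h0
      have h9 := nodup_idx (hPnodup pl' ℓ' hpl') hxB h0
      omega
    have hApl : P pl ℓ = [g, v, ℓ] := path_eq_three hlA hxA hv2 hAlast
    have hBpl : P pl' ℓ' = [g, e, ℓ'] := path_eq_three hlB hxB he2 hBlast
    exact caseS g hwg hgv hge hinG hplpl hφplg hApl (by rw [← hplpl]; exact hBpl)
end

section
/- Let N be a binary nearly stable network and T a binary phylogenetic tree on the same leaf set. Suppose N contains vertices w, u, v and leaves ℓ, ℓ' such that: w is a tree vertex with children u and ℓ', where ℓ' is a leaf; u is a reticulation whose child is the reticulation v; and the child of v is the leaf ℓ. Define N' as follows: if ℓ and ℓ' are not siblings in T (i.e., they do not have a common parent in T), then N' is obtained from N by deleting the edge (w, u); otherwise N' is obtained from N by deleting the incoming edge of u other than (w, u) and the incoming edge of v other than (u, v). If N displays T, then N' displays T. (Theorem 3(i)) -/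
namespace TCP
variable {V : Type*}

lemma chain'_imp_mem {R S : V → V → Prop} :
    ∀ {l : List V}, l.Chain' R → (∀ a ∈ l, ∀ b ∈ l, R a b → S a b) → l.Chain' S
  | [], _, _ => by exact List.isChain_nil
  | [_], _, _ => by exact List.isChain_singleton _
  | a :: b :: t, h, him => by
    simp only [List.Chain', List.isChain_cons_cons] at h ⊢
    exact ⟨him a (by simp) b (by simp) h.1,
      chain'_imp_mem h.2 (fun x hx y hy => him x (List.mem_cons_of_mem _ hx)
        y (List.mem_cons_of_mem _ hy))⟩

lemma mem_tail_pred {R : V → V → Prop} :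
    ∀ {l : List V} {x : V}, l.Chain' R → x ∈ l.tail → ∃ y ∈ l, R y x
  | [], _, _, hx => by simp at hx
  | a :: t, x, h, hx => by
    match t, hx with
    | b :: t', hx =>
      simp only [List.Chain', List.isChain_cons_cons] at h
      rcases List.mem_cons.mp hx with rfl | hx'
      · exact ⟨a, by simp, h.1⟩
      · obtain ⟨y, hy, hyx⟩ := mem_tail_pred h.2 hx'
        exact ⟨y, List.mem_cons_of_mem _ hy, hyx⟩

lemma pred_of_mem {R : V → V → Prop} {l : List V} {a x : V}
    (hc : l.Chain' R) (hh : l.head? = some a) (hx : x ∈ l) :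
    x = a ∨ ∃ y ∈ l, R y x := by
  match l, hh with
  | b :: t, hh =>
    rw [List.head?_cons, Option.some.injEq] at hh
    subst hh
    rcases List.mem_cons.mp hx with rfl | hx'
    · exact Or.inl rfl
    · exact Or.inr (mem_tail_pred hc hx')

lemma succ_of_mem {R : V → V → Prop} {l : List V} {b x : V}
    (hc : l.Chain' R) (hb : l.getLast? = some b) (hx : x ∈ l) :
    x = b ∨ ∃ y ∈ l, R x y := by
  have hc' : l.reverse.Chain' (flip R) := by
    simp only [List.Chain', List.isChain_reverse]
    simpa [Function.flip_def, List.Chain'] using hc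
  have hh : l.reverse.head? = some b := by rw [List.head?_reverse]; exact hb
  rcases pred_of_mem hc' hh (List.mem_reverse.mpr hx) with h | ⟨y, hy, hyx⟩
  · exact Or.inl h
  · exact Or.inr ⟨y, List.mem_reverse.mp hy, hyx⟩

lemma rel_head {R : V → V → Prop} :
    ∀ {t : List V} {a x : V}, List.Chain' R (a :: t) → x ∈ t → Relation.TransGen R a x
  | [], _, _, _, hx => by simp at hx
  | b :: t', a, x, h, hx => by
    simp only [List.Chain', List.isChain_cons_cons] at h
    rcases List.mem_cons.mp hx with rfl | hx'
    · exact Relation.TransGen.single h.1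
    · exact (Relation.TransGen.single h.1).trans (rel_head h.2 hx')

lemma nodup_of_chain' {R : V → V → Prop} (hacy : ∀ z : V, ¬ Relation.TransGen R z z) :
    ∀ {l : List V}, l.Chain' R → l.Nodup
  | [], _ => List.nodup_nil
  | a :: t, h =>
    List.nodup_cons.mpr ⟨fun ha => hacy a (rel_head h ha), nodup_of_chain' hacy h.tail⟩

lemma mem_dropLast_or_getLast :
    ∀ {l : List V} {x : V}, x ∈ l → x ∈ l.dropLast ∨ l.getLast? = some x
  | [a], x, hx => by simp at hx; simp [hx]
  | a :: b :: t, x, hx => by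
    rcases List.mem_cons.mp hx with rfl | hx'
    · exact Or.inl (by simp)
    · rcases mem_dropLast_or_getLast hx' with h | h
      · exact Or.inl (by rw [List.dropLast_cons₂]; exact List.mem_cons_of_mem _ h)
      · exact Or.inr (by rwa [List.getLast?_cons_cons])

lemma getLast_not_mem_dropLast {l : List V} {z : V}
    (hnd : l.Nodup) (hz : l.getLast? = some z) : z ∉ l.dropLast := by
  have hne : l ≠ [] := by rintro rfl; simp at hz
  have heq := List.dropLast_append_getLast hne
  rw [← heq] at hnd
  have hzl : l.getLast hne = z := by
    rw [List.getLast?_eq_getLast hne] at hz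
    injection hz
  intro hmem
  exact (List.disjoint_of_nodup_append hnd) hmem (by simp [hzl])

lemma head_not_mem_tail {l : List V} {h : V}
    (hnd : l.Nodup) (hh : l.head? = some h) : h ∉ l.tail := by
  match l, hh with
  | a :: t, hh =>
    rw [List.head?_cons, Option.some.injEq] at hh
    subst hh
    exact (List.nodup_cons.mp hnd).1

lemma mem_head_of_head? {l : List V} {a : V} (h : l.head? = some a) : a ∈ l := by
  match l, h with
  | b :: t, h => rw [List.head?_cons, Option.some.injEq] at h; simp [h]

lemma mem_of_getLast?' {l : List V} {a : V} (h : l.getLast? = some a) : a ∈ l :=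
  List.mem_of_mem_getLast? (by rw [h]; rfl)

lemma out_unique {adj : V → V → Prop} {a b : V} (h1 : outdeg adj a = 1) (hb : adj a b) :
    ∀ z, adj a z → z = b := by
  obtain ⟨c, hc⟩ := Set.ncard_eq_one.mp h1
  intro z hz
  have hzc : z = c := by have : z ∈ {x | adj a x} := hz; rwa [hc] at this
  have hbc : b = c := by have : b ∈ {x | adj a x} := hb; rwa [hc] at this
  rw [hzc, hbc]

lemma in_unique {adj : V → V → Prop} {a b : V} (h1 : indeg adj b = 1) (ha : adj a b) :
    ∀ z, adj z b → z = a := by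
  obtain ⟨c, hc⟩ := Set.ncard_eq_one.mp h1
  intro z hz
  have hzc : z = c := by have : z ∈ {x | adj x b} := hz; rwa [hc] at this
  have hac : a = c := by have : a ∈ {x | adj x b} := ha; rwa [hc] at this
  rw [hzc, hac]

lemma out_pair {adj : V → V → Prop} {a b c : V} (h2 : outdeg adj a = 2)
    (hb : adj a b) (hc : adj a c) (hbc : b ≠ c) : ∀ z, adj a z → z = b ∨ z = c := by
  obtain ⟨s, t, hst, hset⟩ := Set.ncard_eq_two.mp h2
  intro z hz
  have hz' : z = s ∨ z = t := by
    have : z ∈ {x | adj a x} := hz; rw [hset] at this; simpa using this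
  have hb' : b = s ∨ b = t := by
    have : b ∈ {x | adj a x} := hb; rw [hset] at this; simpa using this
  have hc' : c = s ∨ c = t := by
    have : c ∈ {x | adj a x} := hc; rw [hset] at this; simpa using this
  rcases hb' with rfl | rfl <;> rcases hc' with rfl | rfl <;> rcases hz' with rfl | rfl <;> tauto

lemma out_two_exists {adj : V → V → Prop} {a : V} (h2 : outdeg adj a = 2) :
    ∃ b c, b ≠ c ∧ adj a b ∧ adj a c := by
  obtain ⟨s, t, hst, hset⟩ := Set.ncard_eq_two.mp h2
  refine ⟨s, t, hst, ?_, ?_⟩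
  · show s ∈ {x | adj a x}
    rw [hset]; simp
  · show t ∈ {x | adj a x}
    rw [hset]; simp

lemma in_one_exists {adj : V → V → Prop} {a : V} (h1 : indeg adj a = 1) :
    ∃ b, adj b a := by
  obtain ⟨c, hc⟩ := Set.ncard_eq_one.mp h1
  refine ⟨c, ?_⟩
  show c ∈ {x | adj x a}
  rw [hc]; simp

lemma out_empty {adj : V → V → Prop} {verts : Set V} (hfin : verts.Finite)
    (hmem : ∀ ⦃a b : V⦄, adj a b → a ∈ verts ∧ b ∈ verts) {a : V}
    (h0 : outdeg adj a = 0) : ∀ z, ¬ adj a z := by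
  have hsub : {x | adj a x} ⊆ verts := fun x hx => (hmem hx).2
  have hemp : {x | adj a x} = ∅ := (Set.ncard_eq_zero (hfin.subset hsub)).mp h0
  intro z hz
  have : z ∈ ({x | adj a x} : Set V) := hz
  rw [hemp] at this
  simp at this

lemma mem_tail_dropLast_of {l : List V} {x : V} (h : x ∈ l.tail.dropLast) :
    x ∈ l.dropLast := by
  rw [← List.tail_dropLast] at h
  exact List.mem_of_mem_tail h

lemma getLast?_tail_eq {l : List V} (h : l.tail ≠ []) : l.tail.getLast? = l.getLast? := by
  match l with
  | [] => simp at h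
  | a :: t =>
    match t, h with
    | b :: t', _ =>
      show (b :: t').getLast? = (a :: b :: t').getLast?
      exact (List.getLast?_cons_cons).symm

end TCP

/-- Theorem 3(i): with `w` a tree vertex whose children are the reticulation
`u` and the leaf `ℓ'`, the child of `u` the reticulation `v`, and the child of
`v` the leaf `ℓ`: if `ℓ` and `ℓ'` are not siblings in `T`, delete the edge
`(w, u)`; otherwise delete the incoming edge of `u` other than `(w, u)` and
the incoming edge of `v` other than `(u, v)`. If `N` displays `T`, the
resulting network `N'` displays `T`. -/
theorem tcp_case_A {V : Type*}
    (vertsN : Set V) (adjN : V → V → Prop) (rootN : V)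
    (vertsT : Set V) (adjT : V → V → Prop) (rootT : V)
    (hN : IsBinaryNetwork vertsN adjN rootN)
    (hNS : NearlyStable vertsN adjN rootN)
    (hT : IsBinaryNetwork vertsT adjT rootT)
    (hTtree : ∀ x : V, ¬ IsReticulation adjT x)
    (hleaves : {x : V | IsLeaf vertsT adjT x} = {x : V | IsLeaf vertsN adjN x})
    (w u v ℓ ℓ' : V)
    (hw : IsTreeVertex adjN w) (hwu : adjN w u) (hwl' : adjN w ℓ')
    (hl' : IsLeaf vertsN adjN ℓ')
    (hu : IsReticulation adjN u) (huv : adjN u v)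
    (hv : IsReticulation adjN v) (hvl : adjN v ℓ) (hl : IsLeaf vertsN adjN ℓ)
    (hdisp : Displays vertsN adjN vertsT adjT) :
    (¬ (∃ p : V, adjT p ℓ ∧ adjT p ℓ') →
        Displays vertsN (fun x y => adjN x y ∧ ¬ (x = w ∧ y = u))
          vertsT adjT) ∧
      ((∃ p : V, adjT p ℓ ∧ adjT p ℓ') →
        ∀ x y : V, adjN x u → x ≠ w → adjN y v → y ≠ u →
          Displays vertsN
            (fun p q => adjN p q ∧ ¬ (p = x ∧ q = u) ∧ ¬ (p = y ∧ q = v))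
            vertsT adjT) := by
  classical
  obtain ⟨φ, P, hmap, hinj, hleafφ, hpath, hint, hdisj⟩ := hdisp
  -- basic distinctness facts in N
  have hnself : ∀ {a b : V}, adjN a b → a ≠ b :=
    fun hab heq => hN.acyclic _ (heq ▸ Relation.TransGen.single hab)
  have hTnself : ∀ {a b : V}, adjT a b → a ≠ b :=
    fun hab heq => hT.acyclic _ (heq ▸ Relation.TransGen.single hab)
  have hwu_ne : w ≠ u := hnself hwu
  have huv_ne : u ≠ v := hnself huv
  have hvl_ne : v ≠ ℓ := hnself hvl
  have hwl'_ne : w ≠ ℓ' := hnself hwl'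
  have hul : u ≠ ℓ := fun he =>
    hN.acyclic u (he ▸ ((Relation.TransGen.single huv).trans (Relation.TransGen.single hvl)))
  have hwv : w ≠ v := fun he =>
    hN.acyclic w (he ▸ ((Relation.TransGen.single hwu).trans (Relation.TransGen.single huv)))
  have hwl : w ≠ ℓ := fun he =>
    hN.acyclic w (he ▸ (((Relation.TransGen.single hwu).trans
      (Relation.TransGen.single huv)).trans (Relation.TransGen.single hvl)))
  have hvw : v ≠ w := fun he => by
    have h2 := hv.1; rw [he, hw.1] at h2; exact absurd h2 (by norm_num)
  have hunel' : u ≠ ℓ' := fun he => by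
    have h2 := hu.2; rw [he, hl'.2] at h2; exact absurd h2 (by norm_num)
  have hvnel' : v ≠ ℓ' := fun he => by
    have h2 := hv.2; rw [he, hl'.2] at h2; exact absurd h2 (by norm_num)
  -- neighbour facts in N
  have hOu : ∀ z, adjN u z → z = v := TCP.out_unique hu.2 huv
  have hOv : ∀ z, adjN v z → z = ℓ := TCP.out_unique hv.2 hvl
  have hOw : ∀ z, adjN w z → z = u ∨ z = ℓ' := TCP.out_pair hw.2 hwu hwl' hunel'
  have hOl : ∀ z, ¬ adjN ℓ z := TCP.out_empty hN.finite_verts hN.adj_mem hl.2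
  have hOl' : ∀ z, ¬ adjN ℓ' z := TCP.out_empty hN.finite_verts hN.adj_mem hl'.2
  have hIl : ∀ z, adjN z ℓ → z = v := TCP.in_unique (hN.leaf_indeg ℓ hl.1 hl.2) hvl
  have hIl' : ∀ z, adjN z ℓ' → z = w := TCP.in_unique (hN.leaf_indeg ℓ' hl'.1 hl'.2) hwl'
  have hlnel' : ℓ ≠ ℓ' := fun he => hvw (hIl' v (he ▸ hvl))
  -- T side facts
  have hlT : IsLeaf vertsT adjT ℓ := (Set.ext_iff.mp hleaves ℓ).mpr hl
  have hl'T : IsLeaf vertsT adjT ℓ' := (Set.ext_iff.mp hleaves ℓ').mpr hl'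
  have hlvT : ℓ ∈ vertsT := hlT.1
  have hl'vT : ℓ' ∈ vertsT := hl'T.1
  have hTNleaf : ∀ q, IsLeaf vertsT adjT q → IsLeaf vertsN adjN q :=
    fun q hq => (Set.ext_iff.mp hleaves q).mp hq
  have hTout2 : ∀ q ∈ vertsT, ¬ IsLeaf vertsT adjT q → outdeg adjT q = 2 := by
    intro q hq hnl
    by_cases hqr : q = rootT
    · rw [hqr]; exact hT.root_outdeg
    · have hq0 : outdeg adjT q ≠ 0 := fun h0 => hnl ⟨hq, h0⟩
      rcases hT.internal_deg q hq hqr hq0 with ht | hr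
      · exact ht.2
      · exact absurd hr (hTtree q)
  obtain ⟨pℓ', hpℓ'⟩ : ∃ z, adjT z ℓ' := TCP.in_one_exists (hT.leaf_indeg ℓ' hl'T.1 hl'T.2)
  -- image avoidance facts
  have hφu : ∀ q ∈ vertsT, φ q ≠ u := by
    intro q hq he
    by_cases hql : IsLeaf vertsT adjT q
    · rw [hleafφ q hql] at he
      have h2 := (hTNleaf q hql).2
      rw [he, hu.2] at h2; exact absurd h2 (by norm_num)
    · obtain ⟨c1, c2, hc12, h1, h2⟩ := TCP.out_two_exists (hTout2 q hq hql)
      have key : ∀ c, adjT q c → v ∈ P q c := by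
        intro c hc
        have hp := hpath q c hc
        have huin : u ∈ P q c := he ▸ TCP.mem_head_of_head? hp.2.1
        rcases TCP.succ_of_mem hp.1 hp.2.2 huin with hh | ⟨z, hz, hzadj⟩
        · exfalso
          have hcq : c = q := hinj (hT.adj_mem hc).2 hq (by rw [← hh, he])
          exact hTnself hc hcq.symm
        · rwa [← hOu z hzadj]
      have hd := hdisj q c1 q c2 h1 h2 (by simp [hc12]) v (key c1 h1) (key c2 h2)
      rcases hd.1 with h | h
      · rw [he] at h; exact huv_ne h.symm
      · rcases hd.2 with h' | h'
        · rw [he] at h'; exact huv_ne h'.symm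
        · exact hc12 (hinj (hT.adj_mem h1).2 (hT.adj_mem h2).2 (h.symm.trans h'))
  have hφv : ∀ q ∈ vertsT, φ q ≠ v := by
    intro q hq he
    by_cases hql : IsLeaf vertsT adjT q
    · rw [hleafφ q hql] at he
      have h2 := (hTNleaf q hql).2
      rw [he, hv.2] at h2; exact absurd h2 (by norm_num)
    · obtain ⟨c1, c2, hc12, h1, h2⟩ := TCP.out_two_exists (hTout2 q hq hql)
      have key : ∀ c, adjT q c → ℓ ∈ P q c := by
        intro c hc
        have hp := hpath q c hc
        have hvin : v ∈ P q c := he ▸ TCP.mem_head_of_head? hp.2.1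
        rcases TCP.succ_of_mem hp.1 hp.2.2 hvin with hh | ⟨z, hz, hzadj⟩
        · exfalso
          have hcq : c = q := hinj (hT.adj_mem hc).2 hq (by rw [← hh, he])
          exact hTnself hc hcq.symm
        · rwa [← hOv z hzadj]
      have hd := hdisj q c1 q c2 h1 h2 (by simp [hc12]) ℓ (key c1 h1) (key c2 h2)
      rcases hd.1 with h | h
      · rw [he] at h; exact hvl_ne h.symm
      · rcases hd.2 with h' | h'
        · rw [he] at h'; exact hvl_ne h'.symm
        · exact hc12 (hinj (hT.adj_mem h1).2 (hT.adj_mem h2).2 (h.symm.trans h'))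
  -- membership classification lemmas
  have hmem_l : ∀ a b, adjT a b → ℓ ∈ P a b → b = ℓ := by
    intro a b hab hin
    have hp := hpath a b hab
    rcases TCP.succ_of_mem hp.1 hp.2.2 hin with hh | ⟨z, hz, hzadj⟩
    · exact hinj (hT.adj_mem hab).2 hlvT (by rw [hleafφ ℓ hlT]; exact hh.symm)
    · exact absurd hzadj (hOl z)
  have hmem_l' : ∀ a b, adjT a b → ℓ' ∈ P a b → b = ℓ' := by
    intro a b hab hin
    have hp := hpath a b hab
    rcases TCP.succ_of_mem hp.1 hp.2.2 hin with hh | ⟨z, hz, hzadj⟩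
    · exact hinj (hT.adj_mem hab).2 hl'vT (by rw [hleafφ ℓ' hl'T]; exact hh.symm)
    · exact absurd hzadj (hOl' z)
  have hmem_v : ∀ a b, adjT a b → v ∈ P a b → b = ℓ := by
    intro a b hab hin
    have hp := hpath a b hab
    rcases TCP.succ_of_mem hp.1 hp.2.2 hin with hh | ⟨z, hz, hzadj⟩
    · exact absurd hh.symm (hφv b (hT.adj_mem hab).2)
    · have hzv := hOv z hzadj
      exact hmem_l a b hab (hzv ▸ hz)
  have hmem_u : ∀ a b, adjT a b → u ∈ P a b → b = ℓ := by
    intro a b hab hin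
    have hp := hpath a b hab
    rcases TCP.succ_of_mem hp.1 hp.2.2 hin with hh | ⟨z, hz, hzadj⟩
    · exact absurd hh.symm (hφu b (hT.adj_mem hab).2)
    · have hzv := hOu z hzadj
      exact hmem_v a b hab (hzv ▸ hz)
  have hmem_w : ∀ a b, adjT a b → w ∈ P a b → φ b = w ∨ b = ℓ ∨ b = ℓ' := by
    intro a b hab hin
    have hp := hpath a b hab
    rcases TCP.succ_of_mem hp.1 hp.2.2 hin with hh | ⟨z, hz, hzadj⟩
    · exact Or.inl hh.symm
    · rcases hOw z hzadj with rfl | rfl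
      · exact Or.inr (Or.inl (hmem_u a b hab hz))
      · exact Or.inr (Or.inr (hmem_l' a b hab hz))
  have hφw : ∀ q ∈ vertsT, φ q = w → adjT q ℓ ∧ adjT q ℓ' := by
    intro q hq he
    by_cases hql : IsLeaf vertsT adjT q
    · exfalso
      rw [hleafφ q hql] at he
      have h2 := (hTNleaf q hql).2
      rw [he, hw.2] at h2; exact absurd h2 (by norm_num)
    · obtain ⟨c1, c2, hc12, h1, h2⟩ := TCP.out_two_exists (hTout2 q hq hql)
      have key : ∀ c, adjT q c → c = ℓ ∨ c = ℓ' := by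
        intro c hc
        have hwin : w ∈ P q c := he ▸ TCP.mem_head_of_head? (hpath q c hc).2.1
        rcases hmem_w q c hc hwin with hh | hh | hh
        · exfalso
          have : c = q := hinj (hT.adj_mem hc).2 hq (by rw [hh, he])
          exact hTnself hc this.symm
        · exact Or.inl hh
        · exact Or.inr hh
      rcases key c1 h1 with rfl | rfl <;> rcases key c2 h2 with rfl | rfl
      · exact absurd rfl hc12
      · exact ⟨h1, h2⟩
      · exact ⟨h2, h1⟩
      · exact absurd rfl hc12
  have hwinl' : w ∈ P pℓ' ℓ' := by
    have hp := hpath pℓ' ℓ' hpℓ'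
    have hlin : ℓ' ∈ P pℓ' ℓ' := by
      have hg := hp.2.2; rw [hleafφ ℓ' hl'T] at hg
      exact TCP.mem_of_getLast?' hg
    rcases TCP.pred_of_mem hp.1 hp.2.1 hlin with hh | ⟨z, hz, hzadj⟩
    · exfalso
      have : ℓ' = pℓ' := hinj hl'vT (hT.adj_mem hpℓ').1 (by rw [hleafφ ℓ' hl'T, hh])
      exact hTnself hpℓ' this.symm
    · rwa [← hIl' z hzadj]
  constructor
  · -- Case 1 : ℓ and ℓ' are not siblings in T
    intro hnsib
    refine ⟨φ, P, hmap, hinj, hleafφ, ?_, hint, hdisj⟩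
    intro a b hab
    have hp := hpath a b hab
    refine ⟨TCP.chain'_imp_mem hp.1 ?_, hp.2.1, hp.2.2⟩
    intro c hc d hd hcd
    refine ⟨hcd, ?_⟩
    rintro ⟨hcw, hdu⟩
    have hd' : u ∈ P a b := hdu ▸ hd
    have hc' : w ∈ P a b := hcw ▸ hc
    have hbl : b = ℓ := hmem_u a b hab hd'
    have hd2 := hdisj a b pℓ' ℓ' hab hpℓ'
      (by intro h; exact hlnel' (hbl ▸ congrArg Prod.snd h)) w hc' hwinl'
    rcases hd2.1 with h | h
    · rcases hd2.2 with h' | h'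
      · have : a = pℓ' := hinj (hT.adj_mem hab).1 (hT.adj_mem hpℓ').1 (h.symm.trans h')
        exact hnsib ⟨a, hbl ▸ hab, this ▸ hpℓ'⟩
      · rw [hleafφ ℓ' hl'T] at h'; exact hwl'_ne h'
    · rw [hbl, hleafφ ℓ hlT] at h; exact hwl h
  · -- Case 2 : ℓ and ℓ' are siblings in T
    intro hsib x y hxu hxw hyv hyu
    obtain ⟨p, hpl, hpl'⟩ := hsib
    have hpvT : p ∈ vertsT := (hT.adj_mem hpl).1
    have hpnl : p ≠ ℓ := hTnself hpl
    have hpnl' : p ≠ ℓ' := hTnself hpl'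
    have hIpl : ∀ z, adjT z ℓ → z = p := TCP.in_unique (hT.leaf_indeg ℓ hlT.1 hlT.2) hpl
    have hIpl' : ∀ z, adjT z ℓ' → z = p := TCP.in_unique (hT.leaf_indeg ℓ' hl'T.1 hl'T.2) hpl'
    have hpnotleaf : ¬ IsLeaf vertsT adjT p :=
      fun hpf => (TCP.out_empty hT.finite_verts hT.adj_mem hpf.2) ℓ hpl
    have hpout : ∀ c, adjT p c → c = ℓ ∨ c = ℓ' :=
      TCP.out_pair (hTout2 p hpvT hpnotleaf) hpl hpl' hlnel'
    have hIp : ∀ g g', adjT g p → adjT g' p → g = g' := by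
      have hle : indeg adjT p ≤ 1 := by
        by_cases hpr : p = rootT
        · have h0 := hT.root_indeg
          rw [← hpr] at h0
          rw [h0]; norm_num
        · have hq0 : outdeg adjT p ≠ 0 :=
            fun h0 => (TCP.out_empty hT.finite_verts hT.adj_mem h0) ℓ hpl
          rcases hT.internal_deg p hpvT hpr hq0 with ht | hr
          · rw [ht.1]
          · exact absurd hr (hTtree p)
      intro g g' hg hg'
      exact (Set.ncard_le_one (hT.finite_verts.subset
        (fun z hz => (hT.adj_mem hz).1))).mp hle g hg g' hg'
    -- the path Q := P p ℓ' and its prefix R := Q.dropLast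
    have hQp := hpath p ℓ' hpl'
    have hQlast : (P p ℓ').getLast? = some ℓ' := by rw [hQp.2.2, hleafφ ℓ' hl'T]
    have hQnodup : (P p ℓ').Nodup := TCP.nodup_of_chain' hN.acyclic hQp.1
    have huQ : u ∉ P p ℓ' := fun h => hlnel' (hmem_u p ℓ' hpl' h).symm
    have hvQ : v ∉ P p ℓ' := fun h => hlnel' (hmem_v p ℓ' hpl' h).symm
    have hlQ : ℓ ∉ P p ℓ' := fun h => hlnel' (hmem_l p ℓ' hpl' h).symm
    have hQne : P p ℓ' ≠ [] := by
      intro h; rw [h] at hQlast; simp at hQlast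
    have hφpl' : φ p ≠ ℓ' := fun h => hpnl' (hinj hpvT hl'vT (by rw [h, hleafφ ℓ' hl'T]))
    have hQeq : (P p ℓ').dropLast ++ [ℓ'] = P p ℓ' := by
      have hg : (P p ℓ').getLast hQne = ℓ' := by
        rw [List.getLast?_eq_getLast hQne] at hQlast; injection hQlast
      have hda := List.dropLast_append_getLast hQne
      rw [hg] at hda; exact hda
    have hRne : (P p ℓ').dropLast ≠ [] := by
      intro h
      rw [h] at hQeq
      have hh := hQp.2.1
      rw [← hQeq] at hh
      simp at hh
      exact hφpl' hh.symm
    have hRchain : (P p ℓ').dropLast.Chain' adjN := by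
      have hc := hQp.1
      rw [← hQeq] at hc
      simp only [List.Chain'] at hc
      rw [List.isChain_append] at hc
      exact hc.1
    have hRlast : (P p ℓ').dropLast.getLast? = some w := by
      have hc := hQp.1
      rw [← hQeq] at hc
      simp only [List.Chain'] at hc
      rw [List.isChain_append] at hc
      have hadj : adjN ((P p ℓ').dropLast.getLast hRne) ℓ' := by
        refine hc.2.2 _ ?_ ℓ' rfl
        rw [Option.mem_def, List.getLast?_eq_getLast hRne]
      rw [List.getLast?_eq_getLast hRne, hIl' _ hadj]
    have hl'R : ℓ' ∉ (P p ℓ').dropLast := TCP.getLast_not_mem_dropLast hQnodup hQlast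
    have hRnodup : (P p ℓ').dropLast.Nodup := TCP.nodup_of_chain' hN.acyclic hRchain
    obtain ⟨r0, rt, hRcons⟩ : ∃ r0 rt, (P p ℓ').dropLast = r0 :: rt := by
      cases hR0 : (P p ℓ').dropLast with
      | nil => exact absurd hR0 hRne
      | cons a t => exact ⟨a, t, rfl⟩
    have hRhead : (P p ℓ').dropLast.head? = some (φ p) := by
      have hh := hQp.2.1
      rw [← hQeq, hRcons] at hh
      rw [hRcons]
      simpa using hh
    have hr0 : r0 = φ p := by rw [hRcons] at hRhead; simpa using hRhead
    have hRtail : (P p ℓ').dropLast.tail = rt := by rw [hRcons]; rfl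
    have hjoinN : ∀ d, rt.head? = some d → adjN (φ p) d := by
      intro d hd
      cases rt with
      | nil => simp at hd
      | cons b t =>
        have hb : b = d := by simpa using hd
        have hc := hRchain
        rw [hRcons] at hc
        simp only [List.Chain', List.isChain_cons_cons] at hc
        rw [← hr0, ← hb]; exact hc.1
    have hrtQ : ∀ z, z ∈ rt → z ∈ P p ℓ' := by
      intro z hz
      apply List.mem_of_mem_dropLast
      rw [hRcons]; exact List.mem_cons_of_mem _ hz
    have hrt_int : ∀ z ∈ rt, z ∈ (P p ℓ').tail.dropLast := by
      rw [← hRtail, List.tail_dropLast]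
      exact fun z h => h
    have hl'rt : ℓ' ∉ rt := fun h => hl'R (by rw [hRcons]; exact List.mem_cons_of_mem _ h)
    have hwrt_last : rt ≠ [] → rt.getLast? = some w := by
      intro h
      rw [hRcons] at hRlast
      cases rt with
      | nil => exact absurd rfl h
      | cons b t => rw [List.getLast?_cons_cons] at hRlast; exact hRlast
    have hφpZ : ∀ z, z ∈ rt → z ≠ φ p := by
      intro z hz he
      have hnd := hRnodup
      rw [hRcons] at hnd
      refine (List.nodup_cons.mp hnd).1 ?_
      rw [hr0, ← he]; exact hz
    have hrtchain : rt.Chain' adjN := by rw [← hRtail]; exact hRchain.tail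
    have hrt_nu : u ∉ rt := fun h => huQ (hrtQ u h)
    have hrt_nv : v ∉ rt := fun h => hvQ (hrtQ v h)
    -- classification of old paths
    have hclassu : ∀ a b, adjT a b → u ∈ P a b → a = p ∧ b = ℓ := by
      intro a b hab h
      have hb := hmem_u a b hab h
      exact ⟨hIpl a (hb ▸ hab), hb⟩
    have hclassv : ∀ a b, adjT a b → v ∈ P a b → a = p ∧ b = ℓ := by
      intro a b hab h
      have hb := hmem_v a b hab h
      exact ⟨hIpl a (hb ▸ hab), hb⟩
    have hclassl : ∀ a b, adjT a b → ℓ ∈ P a b → a = p ∧ b = ℓ := by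
      intro a b hab h
      have hb := hmem_l a b hab h
      exact ⟨hIpl a (hb ▸ hab), hb⟩
    have hclassl' : ∀ a b, adjT a b → ℓ' ∈ P a b → a = p ∧ b = ℓ' := by
      intro a b hab h
      have hb := hmem_l' a b hab h
      exact ⟨hIpl' a (hb ▸ hab), hb⟩
    have hclassw : ∀ a b, adjT a b → w ∈ P a b →
        b = p ∨ (a = p ∧ b = ℓ) ∨ (a = p ∧ b = ℓ') := by
      intro a b hab h
      rcases hmem_w a b hab h with hh | hh | hh
      · exact Or.inl (hIpl b (hφw b (hT.adj_mem hab).2 hh).1)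
      · exact Or.inr (Or.inl ⟨hIpl a (hh ▸ hab), hh⟩)
      · exact Or.inr (Or.inr ⟨hIpl' a (hh ▸ hab), hh⟩)
    -- the modified display map and paths
    set φ' : V → V := fun q => if q = p then w else φ q with hφ'def
    set P' : V → V → List V := fun a b =>
      if a = p ∧ b = ℓ then [w, u, v, ℓ]
      else if a = p ∧ b = ℓ' then [w, ℓ']
      else if b = p then P a b ++ rt
      else P a b with hP'def
    have hφ'p : φ' p = w := by rw [hφ'def]; simp
    have hφ'ne : ∀ q, q ≠ p → φ' q = φ q := by intro q h; rw [hφ'def]; simp [h]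
    have hφ'l : φ' ℓ = ℓ := by rw [hφ'ne ℓ (Ne.symm hpnl), hleafφ ℓ hlT]
    have hφ'l' : φ' ℓ' = ℓ' := by rw [hφ'ne ℓ' (Ne.symm hpnl'), hleafφ ℓ' hl'T]
    have hwimg : ∀ q ∈ vertsT, φ q = w → q = p := fun q hq h => hIpl q (hφw q hq h).1
    have hP'1 : P' p ℓ = [w, u, v, ℓ] := by rw [hP'def]; simp
    have hP'2 : P' p ℓ' = [w, ℓ'] := by rw [hP'def]; simp [Ne.symm hlnel']
    have hP'3 : ∀ a b, b = p → P' a b = P a b ++ rt := by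
      intro a b hb
      rw [hP'def]
      simp [hb, hpnl, hpnl']
    have hP'4 : ∀ a b, ¬(a = p ∧ b = ℓ) → ¬(a = p ∧ b = ℓ') → b ≠ p → P' a b = P a b := by
      intro a b h1 h2 h3
      rw [hP'def]
      simp [h1, h2, h3]
    have hupg : ∀ (l : List V), l.Chain' adjN → u ∉ l → v ∉ l →
        l.Chain' (fun p' q' => adjN p' q' ∧ ¬(p' = x ∧ q' = u) ∧ ¬(p' = y ∧ q' = v)) :=
      fun l hc hu' hv' => TCP.chain'_imp_mem hc (fun c _ d hd' hcd =>
        ⟨hcd, fun h => hu' (h.2 ▸ hd'), fun h => hv' (h.2 ▸ hd')⟩)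
    have hwvN : w ∈ vertsN := (hN.adj_mem hwu).1
    -- the non-membership lemmas for the new paths
    have hnou : ∀ a b, adjT a b → ¬(a = p ∧ b = ℓ) → u ∉ P' a b := by
      intro a b hab h1 hin
      by_cases e2 : a = p ∧ b = ℓ'
      · rw [e2.1, e2.2, hP'2] at hin
        simp at hin
        rcases hin with h | h
        · exact hwu_ne h.symm
        · exact hunel' h
      · by_cases e3 : b = p
        · rw [hP'3 a b e3] at hin
          rcases List.mem_append.mp hin with h | h
          · exact hpnl (e3.symm.trans (hclassu a b hab h).2)
          · exact hrt_nu h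
        · rw [hP'4 a b h1 e2 e3] at hin
          exact h1 (hclassu a b hab hin)
    have hnov : ∀ a b, adjT a b → ¬(a = p ∧ b = ℓ) → v ∉ P' a b := by
      intro a b hab h1 hin
      by_cases e2 : a = p ∧ b = ℓ'
      · rw [e2.1, e2.2, hP'2] at hin
        simp at hin
        rcases hin with h | h
        · exact hwv h.symm
        · exact hvnel' h
      · by_cases e3 : b = p
        · rw [hP'3 a b e3] at hin
          rcases List.mem_append.mp hin with h | h
          · exact hpnl (e3.symm.trans (hclassv a b hab h).2)
          · exact hrt_nv h
        · rw [hP'4 a b h1 e2 e3] at hin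
          exact h1 (hclassv a b hab hin)
    refine ⟨φ', P', ?_, ?_, ?_, ?_, ?_, ?_⟩
    · -- MapsTo
      intro q hq
      by_cases h : q = p
      · show φ' q ∈ vertsN
        rw [h, hφ'p]; exact hwvN
      · show φ' q ∈ vertsN
        rw [hφ'ne q h]; exact hmap hq
    · -- InjOn
      intro q1 h1 q2 h2 he
      by_cases e1 : q1 = p
      · by_cases e2 : q2 = p
        · rw [e1, e2]
        · have : q2 = p := hwimg q2 h2 (by rw [← hφ'ne q2 e2, ← he, e1, hφ'p])
          exact absurd this e2
      · by_cases e2 : q2 = p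
        · have : q1 = p := hwimg q1 h1 (by rw [← hφ'ne q1 e1, he, e2, hφ'p])
          exact absurd this e1
        · rw [hφ'ne q1 e1, hφ'ne q2 e2] at he
          exact hinj h1 h2 he
    · -- leaves fixed
      intro q hq
      have hqp : q ≠ p := fun e => hpnotleaf (e ▸ hq)
      rw [hφ'ne q hqp]; exact hleafφ q hq
    · -- paths
      intro a b hab
      by_cases e1 : a = p ∧ b = ℓ
      · obtain ⟨ha, hb⟩ := e1
        rw [ha, hb, hP'1, hφ'p, hφ'l]
        refine ⟨?_, rfl, by simp⟩
        refine List.isChain_cons_cons.mpr ⟨⟨hwu, ?_, ?_⟩, List.isChain_cons_cons.mpr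
          ⟨⟨huv, ?_, ?_⟩, List.isChain_cons_cons.mpr ⟨⟨hvl, ?_, ?_⟩, List.isChain_singleton _⟩⟩⟩
        · rintro ⟨h, -⟩; exact hxw h.symm
        · rintro ⟨-, h⟩; exact huv_ne h
        · rintro ⟨-, h⟩; exact huv_ne h.symm
        · rintro ⟨h, -⟩; exact hyu h.symm
        · rintro ⟨-, h⟩; exact hul h.symm
        · rintro ⟨-, h⟩; exact hvl_ne h.symm
      · by_cases e2 : a = p ∧ b = ℓ'
        · obtain ⟨ha, hb⟩ := e2
          rw [ha, hb, hP'2, hφ'p, hφ'l']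
          refine ⟨?_, rfl, by simp⟩
          refine List.isChain_cons_cons.mpr ⟨⟨hwl', ?_, ?_⟩, List.isChain_singleton _⟩
          · rintro ⟨-, h⟩; exact hunel' h.symm
          · rintro ⟨-, h⟩; exact hvnel' h.symm
        · by_cases e3 : b = p
          · have hab2 : adjT a p := e3 ▸ hab
            have hanp : a ≠ p := hTnself hab2
            rw [hP'3 a b e3, e3, hφ'p, hφ'ne a hanp]
            have hnuP : u ∉ P a p := fun h => hpnl ((hclassu a p hab2 h).2)
            have hnvP : v ∉ P a p := fun h => hpnl ((hclassv a p hab2 h).2)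
            refine ⟨?_, ?_, ?_⟩
            · simp only [List.Chain']
              rw [List.isChain_append]
              refine ⟨hupg _ (hpath a p hab2).1 hnuP hnvP,
                hupg _ hrtchain hrt_nu hrt_nv, ?_⟩
              intro c hc d hd
              rw [Option.mem_def] at hc hd
              have hcφ : c = φ p := by
                have hcc := ((hpath a p hab2).2.2).symm.trans hc
                exact (Option.some.inj hcc).symm
              have hdrt : d ∈ rt := TCP.mem_head_of_head? hd
              exact ⟨by rw [hcφ]; exact hjoinN d hd,
                fun h => hrt_nu (h.2 ▸ hdrt), fun h => hrt_nv (h.2 ▸ hdrt)⟩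
            · rw [List.head?_append, (hpath a p hab2).2.1]; rfl
            · rw [List.getLast?_append]
              by_cases hrte : rt = []
              · have hφpw : φ p = w := by
                  have hrl := hRlast
                  rw [hRcons, hrte] at hrl
                  have : r0 = w := by simpa using hrl
                  rw [← hr0, this]
                simp [hrte, (hpath a p hab2).2.2, hφpw]
              · rw [hwrt_last hrte]; rfl
          · have hanp : a ≠ p := fun e =>
              (hpout b (e ▸ hab)).elim (fun hb => e1 ⟨e, hb⟩) (fun hb => e2 ⟨e, hb⟩)
            rw [hP'4 a b e1 e2 e3, hφ'ne a hanp, hφ'ne b e3]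
            have hp' := hpath a b hab
            exact ⟨hupg _ hp'.1 (fun h => e1 (hclassu a b hab h))
              (fun h => e1 (hclassv a b hab h)), hp'.2.1, hp'.2.2⟩
    · -- interior vertices avoid the image
      intro a b hab z hz himg
      obtain ⟨q, hq, hqz⟩ := himg
      by_cases e1 : a = p ∧ b = ℓ
      · rw [e1.1, e1.2, hP'1] at hz
        simp at hz
        by_cases hqp : q = p
        · rw [hqp, hφ'p] at hqz
          rcases hz with rfl | rfl
          · exact hwu_ne hqz
          · exact hwv hqz
        · rw [hφ'ne q hqp] at hqz
          rcases hz with rfl | rfl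
          · exact hφu q hq hqz
          · exact hφv q hq hqz
      · by_cases e2 : a = p ∧ b = ℓ'
        · rw [e2.1, e2.2, hP'2] at hz
          simp at hz
        · by_cases e3 : b = p
          · have hab2 : adjT a p := e3 ▸ hab
            rw [hP'3 a b e3, e3] at hz
            have hPne : P a p ≠ [] := by
              intro h
              have hh := (hpath a p hab2).2.1
              rw [h] at hh; simp at hh
            have hAchain : (P a p ++ rt).Chain' adjN := by
              simp only [List.Chain']
              rw [List.isChain_append]
              refine ⟨(hpath a p hab2).1, hrtchain, ?_⟩
              intro c hc d hd
              rw [Option.mem_def] at hc hd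
              have hcφ : c = φ p := by
                have hcc := ((hpath a p hab2).2.2).symm.trans hc
                exact (Option.some.inj hcc).symm
              rw [hcφ]; exact hjoinN d hd
            have hAnodup := TCP.nodup_of_chain' hN.acyclic hAchain
            have hAlast : (P a p ++ rt).getLast? = some w := by
              rw [List.getLast?_append]
              by_cases hrte : rt = []
              · have hφpw : φ p = w := by
                  have hrl := hRlast
                  rw [hRcons, hrte] at hrl
                  have : r0 = w := by simpa using hrl
                  rw [← hr0, this]
                simp [hrte, (hpath a p hab2).2.2, hφpw]
              · rw [hwrt_last hrte]; rfl
            have hzdrop : z ∈ (P a p ++ rt).dropLast := TCP.mem_tail_dropLast_of hz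
            by_cases hqp : q = p
            · rw [hqp, hφ'p] at hqz
              exact TCP.getLast_not_mem_dropLast hAnodup hAlast (hqz ▸ hzdrop)
            · rw [hφ'ne q hqp] at hqz
              have hztail : z ∈ (P a p).tail ++ rt := by
                have h' := List.mem_of_mem_dropLast hz
                rwa [List.tail_append_of_ne_nil hPne] at h'
              rcases List.mem_append.mp hztail with hzP | hzrt
              · rcases TCP.mem_dropLast_or_getLast hzP with hzi | hzl
                · exact hint a p hab2 z hzi ⟨q, hq, hqz⟩
                · have htne : (P a p).tail ≠ [] := by
                    intro h; rw [h] at hzP; simp at hzP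
                  rw [TCP.getLast?_tail_eq htne, (hpath a p hab2).2.2] at hzl
                  have hzφp : z = φ p := by injection hzl.symm
                  exact hqp (hinj hq hpvT (hqz.trans hzφp))
              · exact hint p ℓ' hpl' z (hrt_int z hzrt) ⟨q, hq, hqz⟩
          · rw [hP'4 a b e1 e2 e3] at hz
            have hzin : z ∈ P a b := List.mem_of_mem_tail (List.mem_of_mem_dropLast hz)
            by_cases hqp : q = p
            · rw [hqp, hφ'p] at hqz
              rcases hclassw a b hab (hqz ▸ hzin) with h | h | h
              · exact e3 h
              · exact e1 h
              · exact e2 h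
            · rw [hφ'ne q hqp] at hqz
              exact hint a b hab z hz ⟨q, hq, hqz⟩
    · -- disjointness
      have aux : ∀ a b a' b', adjT a b → adjT a' b' → (a, b) ≠ (a', b') →
          ∀ z, z ∈ P' a b → z ∈ P' a' b' → z = φ' a ∨ z = φ' b := by
        intro a b a' b' hab hab' hne z hz hz'
        by_cases e1 : a = p ∧ b = ℓ
        · obtain ⟨ha, hb⟩ := e1
          rw [ha, hb, hP'1] at hz
          rw [ha, hb, hφ'p, hφ'l]
          simp at hz
          rcases hz with rfl | rfl | rfl | rfl
          · exact Or.inl rfl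
          · exact absurd hz' (hnou a' b' hab'
              (fun h => hne (by rw [ha, hb, h.1, h.2])))
          · exact absurd hz' (hnov a' b' hab'
              (fun h => hne (by rw [ha, hb, h.1, h.2])))
          · exact Or.inr rfl
        · by_cases e2 : a = p ∧ b = ℓ'
          · obtain ⟨ha, hb⟩ := e2
            rw [ha, hb, hP'2] at hz
            rw [ha, hb, hφ'p, hφ'l']
            simp at hz
            rcases hz with rfl | rfl
            · exact Or.inl rfl
            · exact Or.inr rfl
          · by_cases e3 : b = p
            · have hab2 : adjT a p := e3 ▸ hab
              rw [hP'3 a b e3, e3] at hz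
              rw [e3, hφ'ne a (hTnself hab2), hφ'p]
              rcases List.mem_append.mp hz with hzP | hzrt
              · by_cases f1 : a' = p ∧ b' = ℓ
                · rw [f1.1, f1.2, hP'1] at hz'
                  simp at hz'
                  rcases hz' with rfl | rfl | rfl | rfl
                  · exact Or.inr rfl
                  · exact absurd ((hclassu a p hab2 hzP).2) hpnl
                  · exact absurd ((hclassv a p hab2 hzP).2) hpnl
                  · exact absurd ((hclassl a p hab2 hzP).2) hpnl
                · by_cases f2 : a' = p ∧ b' = ℓ'
                  · rw [f2.1, f2.2, hP'2] at hz'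
                    simp at hz'
                    rcases hz' with rfl | rfl
                    · exact Or.inr rfl
                    · exact absurd ((hclassl' a p hab2 hzP).2) hpnl'
                  · by_cases f3 : b' = p
                    · exact absurd (by rw [e3, f3, hIp a a' hab2 (f3 ▸ hab')]) hne
                    · rw [hP'4 a' b' f1 f2 f3] at hz'
                      have hd := hdisj a p a' b' hab2 hab'
                        (fun h => f3 (congrArg Prod.snd h).symm) z hzP hz'
                      rcases hd.1 with h | h
                      · exact Or.inl h
                      · exfalso
                        rcases hd.2 with h' | h'
                        · have hap : a' = p :=
                            hinj (hT.adj_mem hab').1 hpvT (h'.symm.trans h)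
                          rcases hpout b' (hap ▸ hab') with hb | hb
                          · exact f1 ⟨hap, hb⟩
                          · exact f2 ⟨hap, hb⟩
                        · exact f3 (hinj (hT.adj_mem hab').2 hpvT (h'.symm.trans h))
              · have hzQ : z ∈ P p ℓ' := hrtQ z hzrt
                have hznφp : z ≠ φ p := hφpZ z hzrt
                by_cases f1 : a' = p ∧ b' = ℓ
                · rw [f1.1, f1.2, hP'1] at hz'
                  simp at hz'
                  rcases hz' with rfl | rfl | rfl | rfl
                  · exact Or.inr rfl
                  · exact absurd hzQ huQ
                  · exact absurd hzQ hvQ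
                  · exact absurd hzQ hlQ
                · by_cases f2 : a' = p ∧ b' = ℓ'
                  · rw [f2.1, f2.2, hP'2] at hz'
                    simp at hz'
                    rcases hz' with rfl | rfl
                    · exact Or.inr rfl
                    · exact absurd hzrt hl'rt
                  · by_cases f3 : b' = p
                    · exact absurd (by rw [e3, f3, hIp a a' hab2 (f3 ▸ hab')]) hne
                    · rw [hP'4 a' b' f1 f2 f3] at hz'
                      have hd := hdisj p ℓ' a' b' hpl' hab'
                        (fun h => f2 ⟨(congrArg Prod.fst h).symm,
                          (congrArg Prod.snd h).symm⟩) z hzQ hz'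
                      exfalso
                      rcases hd.1 with h | h
                      · exact hznφp h
                      · rw [hleafφ ℓ' hl'T] at h
                        exact hl'rt (h ▸ hzrt)
            · have hanp : a ≠ p := fun e =>
                (hpout b (e ▸ hab)).elim (fun hb => e1 ⟨e, hb⟩) (fun hb => e2 ⟨e, hb⟩)
              rw [hP'4 a b e1 e2 e3] at hz
              rw [hφ'ne a hanp, hφ'ne b e3]
              by_cases f1 : a' = p ∧ b' = ℓ
              · rw [f1.1, f1.2, hP'1] at hz'
                simp at hz'
                exfalso
                rcases hz' with rfl | rfl | rfl | rfl
                · rcases hclassw a b hab hz with h | h | h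
                  · exact e3 h
                  · exact e1 h
                  · exact e2 h
                · exact e1 (hclassu a b hab hz)
                · exact e1 (hclassv a b hab hz)
                · exact e1 (hclassl a b hab hz)
              · by_cases f2 : a' = p ∧ b' = ℓ'
                · rw [f2.1, f2.2, hP'2] at hz'
                  simp at hz'
                  exfalso
                  rcases hz' with rfl | rfl
                  · rcases hclassw a b hab hz with h | h | h
                    · exact e3 h
                    · exact e1 h
                    · exact e2 h
                  · exact e2 (hclassl' a b hab hz)
                · by_cases f3 : b' = p
                  · rw [hP'3 a' b' f3] at hz'
                    rcases List.mem_append.mp hz' with hzP' | hzrt'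
                    · exact (hdisj a b a' b' hab hab' hne z hz hzP').1
                    · exact (hdisj a b p ℓ' hab hpl'
                        (fun h => e2 ⟨congrArg Prod.fst h, congrArg Prod.snd h⟩)
                        z hz (hrtQ z hzrt')).1
                  · rw [hP'4 a' b' f1 f2 f3] at hz'
                    exact (hdisj a b a' b' hab hab' hne z hz hz').1
      intro a b a' b' hab hab' hne z hz hz'
      exact ⟨aux a b a' b' hab hab' hne z hz hz',
        aux a' b' a b hab' hab (fun h => hne h.symm) z hz' hz⟩
end
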